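/- arXiv:2101.11316 — 5 statements merged into one kernel-verified Lean document; each statement's English description precedes it below -/
import Mathlib

section
/- Let d ≥ 2 be an integer. For every bounded Borel set A ⊆ ℝ^{d−1} and every bounded Borel set B ⊆ ℝ, lim_{β→∞} c_{d,β} (2β)^{−d/2} ∫_A ∫_B 1{s ≥ −2β} (1 + s/(2β))^β ds dw = (2π)^{−d/2} · λ_{d−1}(A) · ∫_B e^{s/2} ds, where λ_{d−1} is Lebesgue measure on ℝ^{d−1}. -/
open MeasureTheory

/-- The constant `c_{d,β} = Γ(d/2+β+1)/(π^{d/2} Γ(β+1))`. -/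
noncomputable def cBeta (d : ℕ) (β : ℝ) : ℝ :=
  Real.Gamma ((d : ℝ) / 2 + β + 1) / (Real.pi ^ ((d : ℝ) / 2) * Real.Gamma (β + 1))

open Filter Real in
private lemma auxDivAdd (θ : ℝ) : Tendsto (fun x : ℝ => x / (x + θ)) atTop (nhds 1) := by
  have h : Tendsto (fun x : ℝ => 1 - θ / (x + θ)) atTop (nhds (1 - 0)) :=
    tendsto_const_nhds.sub (Tendsto.div_atTop tendsto_const_nhds
      (tendsto_atTop_add_const_right _ θ tendsto_id))
  rw [sub_zero] at h
  refine h.congr' ?_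
  filter_upwards [eventually_gt_atTop (max 0 (-θ))] with x hx
  have hx0 : (0:ℝ) < x + θ := by
    have := lt_of_le_of_lt (le_max_right 0 (-θ)) hx; linarith
  field_simp
  ring

open Filter Real in
private lemma auxAddDiv (c : ℝ) : Tendsto (fun x : ℝ => (x + c) / x) atTop (nhds 1) := by
  have h : Tendsto (fun x : ℝ => 1 + c / x) atTop (nhds (1 + 0)) :=
    tendsto_const_nhds.add (Tendsto.div_atTop tendsto_const_nhds tendsto_id)
  rw [add_zero] at h
  refine h.congr' ?_
  filter_upwards [eventually_gt_atTop 0] with x hx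
  field_simp

open Filter Real in
private lemma gammaRatioBase {θ : ℝ} (h0 : 0 < θ) (h1 : θ < 1) :
    Tendsto (fun x : ℝ => Gamma (x + θ) / (Gamma x * x ^ θ)) atTop (nhds 1) := by
  have hlow : Tendsto (fun x : ℝ => (x / (x + θ)) ^ (1 - θ)) atTop (nhds 1) := by
    have := (auxDivAdd θ).rpow_const (p := 1 - θ) (Or.inr (by linarith))
    simpa using this
  refine tendsto_of_tendsto_of_tendsto_of_le_of_le' hlow tendsto_const_nhds ?_ ?_
  · -- lower bound
    filter_upwards [eventually_gt_atTop 0] with x hx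
    have hxθ : 0 < x + θ := by linarith
    have hΓx : 0 < Gamma x := Gamma_pos_of_pos hx
    have hΓxθ : 0 < Gamma (x + θ) := Gamma_pos_of_pos hxθ
    have key : x * Gamma x ≤ Gamma (x + θ) * (x + θ) ^ (1 - θ) := by
      have h := Gamma_mul_add_mul_le_rpow_Gamma_mul_rpow_Gamma (s := x + θ) (t := x + θ + 1)
        (a := θ) (b := 1 - θ) hxθ (by linarith) h0 (by linarith) (by ring)
      have harg : θ * (x + θ) + (1 - θ) * (x + θ + 1) = x + 1 := by ring
      rw [harg] at h
      rw [Gamma_add_one hx.ne', Gamma_add_one hxθ.ne'] at h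
      calc x * Gamma x ≤ Gamma (x + θ) ^ θ * ((x + θ) * Gamma (x + θ)) ^ (1 - θ) := h
        _ = Gamma (x + θ) * (x + θ) ^ (1 - θ) := by
            rw [mul_rpow hxθ.le hΓxθ.le]
            rw [show Gamma (x+θ) ^ θ * ((x+θ) ^ (1-θ) * Gamma (x+θ) ^ (1-θ))
              = (Gamma (x+θ) ^ θ * Gamma (x+θ) ^ (1-θ)) * (x+θ) ^ (1-θ) by ring]
            rw [← rpow_add hΓxθ, add_sub_cancel, rpow_one]
    rw [div_rpow hx.le hxθ.le, div_le_div_iff₀ (rpow_pos_of_pos hxθ _)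
      (mul_pos hΓx (rpow_pos_of_pos hx θ))]
    calc x ^ (1 - θ) * (Gamma x * x ^ θ) = (x ^ (1-θ) * x ^ θ) * Gamma x := by ring
      _ = x * Gamma x := by rw [← rpow_add hx, sub_add_cancel, rpow_one]
      _ ≤ Gamma (x + θ) * (x + θ) ^ (1 - θ) := key
  · -- upper bound
    filter_upwards [eventually_gt_atTop 0] with x hx
    have hΓx : 0 < Gamma x := Gamma_pos_of_pos hx
    have h := Gamma_mul_add_mul_le_rpow_Gamma_mul_rpow_Gamma (s := x) (t := x + 1)
      (a := 1 - θ) (b := θ) hx (by linarith) (by linarith) h0 (by ring)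
    have harg : (1 - θ) * x + θ * (x + 1) = x + θ := by ring
    rw [harg, Gamma_add_one hx.ne'] at h
    rw [div_le_one (mul_pos hΓx (rpow_pos_of_pos hx θ))]
    calc Gamma (x + θ) ≤ Gamma x ^ (1 - θ) * (x * Gamma x) ^ θ := h
      _ = Gamma x * x ^ θ := by
          rw [mul_rpow hx.le hΓx.le,
            show Gamma x ^ (1-θ) * (x ^ θ * Gamma x ^ θ) =
              (Gamma x ^ (1-θ) * Gamma x ^ θ) * x ^ θ by ring,
            ← rpow_add hΓx, sub_add_cancel, rpow_one]

open Filter Real in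
private lemma gammaRatioStep {a : ℝ} (ha : 0 ≤ a)
    (h : Tendsto (fun x : ℝ => Gamma (x + a) / (Gamma x * x ^ a)) atTop (nhds 1)) :
    Tendsto (fun x : ℝ => Gamma (x + (a + 1)) / (Gamma x * x ^ (a + 1))) atTop (nhds 1) := by
  have h2 := h.mul (auxAddDiv a)
  rw [mul_one] at h2
  refine Tendsto.congr' ?_ h2
  filter_upwards [eventually_gt_atTop 0] with x hx
  have hxa : 0 < x + a := by linarith
  have hΓx : Gamma x ≠ 0 := (Gamma_pos_of_pos hx).ne'
  rw [show x + (a + 1) = (x + a) + 1 by ring, Gamma_add_one hxa.ne', rpow_add hx, rpow_one]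
  field_simp

open Filter Real in
private lemma gammaRatioNat {a : ℝ} (ha : 0 ≤ a)
    (h : Tendsto (fun x : ℝ => Gamma (x + a) / (Gamma x * x ^ a)) atTop (nhds 1)) (n : ℕ) :
    Tendsto (fun x : ℝ => Gamma (x + (a + n)) / (Gamma x * x ^ (a + n))) atTop (nhds 1) := by
  induction n with
  | zero => simpa using h
  | succ n ih =>
      have := gammaRatioStep (by positivity) ih
      have e : a + ((n+1 : ℕ) : ℝ) = a + n + 1 := by push_cast; ring
      rw [e]
      exact this

open Filter Real in
private lemma gammaRatioZero :
    Tendsto (fun x : ℝ => Gamma (x + 0) / (Gamma x * x ^ (0:ℝ))) atTop (nhds 1) := by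
  refine Tendsto.congr' ?_ (tendsto_const_nhds (x := (1:ℝ)))
  filter_upwards [eventually_gt_atTop 0] with x hx
  rw [add_zero, rpow_zero, mul_one, div_self (Gamma_pos_of_pos hx).ne']

open Filter Real in
private lemma gammaRatioHalfNat (d : ℕ) :
    Tendsto (fun x : ℝ => Gamma (x + (d:ℝ)/2) / (Gamma x * x ^ ((d:ℝ)/2))) atTop (nhds 1) := by
  rcases Nat.even_or_odd d with ⟨k, hk⟩ | ⟨k, hk⟩
  · have e : (d:ℝ)/2 = 0 + (k:ℝ) := by subst hk; push_cast; ring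
    rw [e]
    exact gammaRatioNat le_rfl gammaRatioZero k
  · have e : (d:ℝ)/2 = 1/2 + (k:ℝ) := by subst hk; push_cast; ring
    rw [e]
    exact gammaRatioNat (by norm_num) (gammaRatioBase (by norm_num) (by norm_num)) k

open Filter Real in
private lemma constLimit (d : ℕ) :
    Tendsto (fun β : ℝ => cBeta d β * (2 * β) ^ (-(d:ℝ)/2)) atTop
      (nhds ((2 * Real.pi) ^ (-(d:ℝ)/2))) := by
  set D : ℝ := (d:ℝ)/2 with hD
  have hG : Tendsto (fun β : ℝ => Gamma ((β+1) + D) / (Gamma (β+1) * (β+1) ^ D)) atTop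
      (nhds 1) := (gammaRatioHalfNat d).comp (tendsto_atTop_add_const_right _ 1 tendsto_id)
  have hq : Tendsto (fun β : ℝ => (β+1) / (2*β)) atTop (nhds (1/2)) := by
    refine Tendsto.congr' ?_ ((auxAddDiv 1).div_const 2)
    filter_upwards [eventually_gt_atTop 0] with β hβ
    rw [div_div, mul_comm β 2]
  have hC : Tendsto (fun β : ℝ => ((β+1) / (2*β)) ^ D * Real.pi ^ (-D)) atTop
      (nhds ((1/2 : ℝ) ^ D * Real.pi ^ (-D))) :=
    (hq.rpow_const (Or.inl (by norm_num))).mul_const _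
  have hval : (2 * Real.pi) ^ (-(d:ℝ)/2) = (1/2 : ℝ) ^ D * Real.pi ^ (-D) := by
    rw [show -(d:ℝ)/2 = -D by rw [hD]; ring, mul_rpow two_pos.le pi_pos.le,
      rpow_neg two_pos.le, one_div, inv_rpow two_pos.le]
  rw [hval]
  have := hG.mul hC
  rw [one_mul] at this
  refine Tendsto.congr' ?_ this
  filter_upwards [eventually_gt_atTop 0] with β hβ
  have hβ1 : (0:ℝ) < β + 1 := by linarith
  have h2β : (0:ℝ) < 2 * β := by linarith
  have hΓ : (0:ℝ) < Gamma (β+1) := Gamma_pos_of_pos hβ1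
  rw [div_rpow hβ1.le h2β.le, rpow_neg pi_pos.le]
  unfold cBeta
  rw [show (d:ℝ)/2 + β + 1 = (β+1) + D by rw [hD]; ring, show -(d:ℝ)/2 = -D by rw [hD]; ring,
    rpow_neg h2β.le]
  have hπD : (0:ℝ) < Real.pi ^ D := rpow_pos_of_pos pi_pos D
  have hβD : (0:ℝ) < (β+1) ^ D := rpow_pos_of_pos hβ1 D
  have h2βD : (0:ℝ) < (2*β) ^ D := rpow_pos_of_pos h2β D
  field_simp
  ring

open Filter Real in
private lemma innerLimit (B : Set ℝ) (hB : MeasurableSet B) (hBb : Bornology.IsBounded B) :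
    Tendsto (fun β : ℝ =>
        ∫ s in B, (if -(2 * β) ≤ s then (1 + s / (2 * β)) ^ β else 0))
      atTop (nhds (∫ s in B, Real.exp (s / 2))) := by
  obtain ⟨r, hr⟩ := hBb.subset_closedBall 0
  set M : ℝ := max r 1 with hM
  have hM1 : (1:ℝ) ≤ M := le_max_right r 1
  have hBM : B ⊆ Set.Icc (-M) M := by
    refine hr.trans ?_
    rw [Real.closedBall_eq_Icc, zero_sub, zero_add]
    exact Set.Icc_subset_Icc (neg_le_neg (le_max_left r 1)) (le_max_left r 1)
  have hμB : volume B < ⊤ := hBb.measure_lt_top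
  refine tendsto_integral_filter_of_dominated_convergence (μ := volume.restrict B)
    (fun _ => Real.exp (M / 2)) ?_ ?_ ?_ ?_
  · -- measurability
    refine Eventually.of_forall fun β => ?_
    have hmeas : Measurable fun s : ℝ =>
        if -(2 * β) ≤ s then (1 + s / (2 * β)) ^ β else 0 := by
      refine Measurable.ite ?_ ?_ measurable_const
      · exact measurableSet_Ici
      · exact (measurable_const.add (measurable_id.div_const _)).pow measurable_const
    exact hmeas.aestronglyMeasurable
  · -- bound
    filter_upwards [eventually_ge_atTop M] with β hβ
    rw [ae_restrict_iff' hB]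
    refine ae_of_all _ fun s hs => ?_
    obtain ⟨hs1, hs2⟩ := hBM hs
    have hβpos : (0:ℝ) < β := lt_of_lt_of_le one_pos (hM1.trans hβ)
    have h2β : (0:ℝ) < 2 * β := by linarith
    have hcond : -(2 * β) ≤ s := by nlinarith
    have hbase : (0:ℝ) < 1 + s / (2 * β) := by
      have : -(1:ℝ) < s / (2*β) := by
        rw [lt_div_iff₀ h2β]
        nlinarith
      linarith
    rw [if_pos hcond, Real.norm_eq_abs,
      abs_of_nonneg (rpow_nonneg hbase.le β)]
    rw [rpow_def_of_pos hbase]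
    refine Real.exp_le_exp.2 ?_
    have hlog : Real.log (1 + s / (2*β)) ≤ s / (2*β) := by
      have := Real.log_le_sub_one_of_pos hbase
      linarith
    calc Real.log (1 + s / (2*β)) * β ≤ (s / (2*β)) * β :=
          mul_le_mul_of_nonneg_right hlog hβpos.le
      _ = s / 2 := by field_simp
      _ ≤ M / 2 := by linarith
  · exact integrableOn_const hμB.ne
  · refine ae_of_all _ fun s => ?_
    refine Tendsto.congr' ?_ (tendsto_one_add_div_rpow_exp (s/2))
    filter_upwards [eventually_ge_atTop (|s|)] with β hβ
    have : -(2 * β) ≤ s := by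
      have h1 := neg_abs_le s
      have h2 := abs_nonneg s
      nlinarith
    rw [if_pos this, div_div]

/-- For bounded Borel `A ⊆ ℝ^{d-1}` and `B ⊆ ℝ`,
`c_{d,β} (2β)^{-d/2} ∫_A ∫_B 1{s ≥ -2β}(1+s/(2β))^β ds dw →
(2π)^{-d/2} λ_{d-1}(A) ∫_B e^{s/2} ds` as `β → ∞`. -/
theorem stmt_2 (d : ℕ) (hd : 2 ≤ d)
    (A : Set (EuclideanSpace ℝ (Fin (d - 1)))) (hA : MeasurableSet A)
    (hAb : Bornology.IsBounded A)
    (B : Set ℝ) (hB : MeasurableSet B) (hBb : Bornology.IsBounded B) :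
    Filter.Tendsto (fun β : ℝ =>
        cBeta d β * (2 * β) ^ (-(d : ℝ) / 2) *
          ∫ _v in A, ∫ s in B, (if -(2 * β) ≤ s then (1 + s / (2 * β)) ^ β else 0))
      Filter.atTop
      (nhds ((2 * Real.pi) ^ (-(d : ℝ) / 2) * (volume A).toReal *
        ∫ s in B, Real.exp (s / 2))) := by
  have h1 := constLimit d
  have h2 := (innerLimit B hB hBb).const_mul ((volume A).toReal)
  have h3 := h1.mul h2
  rw [mul_assoc]
  refine Filter.Tendsto.congr ?_ h3
  intro β
  rw [setIntegral_const, smul_eq_mul, measureReal_def]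
end

section
/- Let d ≥ 2 be an integer, β > 1 real, A > 0 and t ∈ ℝ. Then (c_{d,β} π^{(d−1)/2} / ((2β)^{d/2} Γ((d+1)/2))) · ∫_{−2β}^{t} (√(t−s) + A)^{d−1} (1 + s/(2β))^{β} ds < (2(d/2+1)^{d/2}/√π) · (A+1)^{d−1} e^{t/2}, where the integral is interpreted as 0 if t ≤ −2β. -/
open MeasureTheory

open Real Finset

set_option maxHeartbeats 1000000

noncomputable def Pa : ℕ → ℝ → ℝ
  | 0, _ => 2
  | (m+1), u => 2*u^(m+1) + 2*(m+1)*Pa m u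

lemma Pa_nonneg (m : ℕ) {u : ℝ} (hu : 0 ≤ u) : 0 ≤ Pa m u := by
  induction m with
  | zero => norm_num [Pa]
  | succ m ih =>
    simp only [Pa]
    have h1 : (0:ℝ) ≤ 2*u^(m+1) := by positivity
    have h2 : (0:ℝ) ≤ 2*(m+1) := by positivity
    nlinarith

lemma Pa_one_succ (m : ℕ) : Pa (m+1) 1 = 2 + 2*(m+1)*Pa m 1 := by
  simp [Pa]

lemma Pa_one_ge_two (m : ℕ) : 2 ≤ Pa m 1 := by
  induction m with
  | zero => norm_num [Pa]
  | succ m ih =>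
    rw [Pa_one_succ]
    have : (0:ℝ) ≤ 2*(m+1) := by positivity
    nlinarith

lemma Pa_hasDeriv (m : ℕ) (t s : ℝ) :
    HasDerivAt (fun s => Real.exp (s/2) * Pa m (1+t-s)) (Real.exp (s/2) * (1+t-s)^m) s := by
  induction m with
  | zero =>
    have h : HasDerivAt (fun s : ℝ => Real.exp (s/2) * 2) (Real.exp (s/2) * (1/2) * 2) s := by
      exact (((hasDerivAt_id s).div_const 2).exp).mul_const 2
    convert h using 1
    · funext x; simp [Pa]
    · rw [pow_zero, mul_one]; ring
  | succ m ih =>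
    have h1 : HasDerivAt (fun s : ℝ => 1 + t - s) (-1) s := by
      simpa using ((hasDerivAt_id s).const_sub (1+t))
    have h2 : HasDerivAt (fun s : ℝ => (1+t-s)^(m+1))
        (((m:ℝ)+1) * (1+t-s)^m * (-1)) s := by
      have := h1.fun_pow (m+1)
      simpa using this
    have he : HasDerivAt (fun s : ℝ => Real.exp (s/2)) (Real.exp (s/2) * (1/2)) s :=
      ((hasDerivAt_id s).div_const 2).exp
    have hc : HasDerivAt (fun s : ℝ => Real.exp (s/2) * (2*(1+t-s)^(m+1))
          + 2*((m:ℝ)+1)*(Real.exp (s/2) * Pa m (1+t-s)))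
        ((Real.exp (s/2) * (1/2)) * (2*(1+t-s)^(m+1))
          + Real.exp (s/2) * (2*(((m:ℝ)+1) * (1+t-s)^m * (-1)))
          + 2*((m:ℝ)+1)*(Real.exp (s/2) * (1+t-s)^m)) s := by
      exact (he.mul (h2.const_mul 2)).add (ih.const_mul (2*((m:ℝ)+1)))
    convert hc using 1
    · funext x; simp only [Pa]; push_cast; ring
    · push_cast; ring

lemma integral_bound (m : ℕ) {a t : ℝ} (h : a ≤ t) :
    ∫ s in Set.Icc a t, Real.exp (s/2) * (1+t-s)^m ≤ Real.exp (t/2) * Pa m 1 := by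
  have hcont : Continuous fun s : ℝ => Real.exp (s/2) * (1+t-s)^m := by
    exact (Real.continuous_exp.comp (continuous_id.div_const 2)).mul
      ((continuous_const.sub continuous_id).pow m)
  rw [MeasureTheory.integral_Icc_eq_integral_Ioc, ← intervalIntegral.integral_of_le h]
  rw [intervalIntegral.integral_eq_sub_of_hasDerivAt (fun s _ => Pa_hasDeriv m t s)
    (hcont.intervalIntegrable a t)]
  have h0 : 0 ≤ Real.exp (a/2) * Pa m (1+t-a) :=
    mul_nonneg (Real.exp_pos _).le (Pa_nonneg m (by linarith))
  have : (1:ℝ) + t - t = 1 := by ring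
  rw [this]
  linarith


lemma sqrtA_le {A r : ℝ} (hA : 0 < A) (hr : 0 ≤ r) :
    Real.sqrt r + A ≤ (A+1) * Real.sqrt (1+r) := by
  have h1 : Real.sqrt r ≤ Real.sqrt (1+r) := Real.sqrt_le_sqrt (by linarith)
  have h2 : (1:ℝ) ≤ Real.sqrt (1+r) := by
    have hs := Real.sq_sqrt (show (0:ℝ) ≤ 1+r by linarith)
    nlinarith [Real.sqrt_nonneg (1+r)]
  nlinarith [Real.sqrt_nonneg r]

lemma rpow_exp_le {β s : ℝ} (hβ : 1 < β) (hs : -(2*β) ≤ s) :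
    (1 + s/(2*β)) ^ β ≤ Real.exp (s/2) := by
  have hβ0 : (0:ℝ) < β := by linarith
  have h2β : (0:ℝ) < 2*β := by linarith
  have hb0 : 0 ≤ 1 + s/(2*β) := by
    have : -1 ≤ s/(2*β) := by
      rw [le_div_iff₀ h2β]; linarith
    linarith
  have hle : 1 + s/(2*β) ≤ Real.exp (s/(2*β)) := by
    have := Real.add_one_le_exp (s/(2*β)); linarith
  calc (1 + s/(2*β)) ^ β ≤ (Real.exp (s/(2*β))) ^ β :=
        Real.rpow_le_rpow hb0 hle hβ0.le
    _ = Real.exp (s/2) := by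
        rw [← Real.exp_mul]
        congr 1
        field_simp

lemma sqrt_one_add_le {r : ℝ} (hr : 0 ≤ r) :
    Real.sqrt (1+r) * (2 * Real.sqrt 3) ≤ r + 4 := by
  have h3 : Real.sqrt 12 = 2 * Real.sqrt 3 := by
    rw [show (12:ℝ) = 2^2*3 by norm_num, Real.sqrt_mul (by positivity) 3,
      Real.sqrt_sq (by norm_num)]
  have h12 : Real.sqrt (1+r) * (2 * Real.sqrt 3) = Real.sqrt (12*(1+r)) := by
    rw [show (12:ℝ)*(1+r) = (1+r)*12 by ring, Real.sqrt_mul (by linarith) 12, h3]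
  rw [h12]
  have : (12:ℝ)*(1+r) ≤ (r+4)^2 := by nlinarith [sq_nonneg (r-2)]
  calc Real.sqrt (12*(1+r)) ≤ Real.sqrt ((r+4)^2) := Real.sqrt_le_sqrt this
    _ = r + 4 := Real.sqrt_sq (by linarith)

lemma Gamma_add_nat' {x : ℝ} (hx : 0 < x) (n : ℕ) :
    Real.Gamma (x + n) = Real.Gamma x * ∏ j ∈ Finset.range n, (x + j) := by
  induction n with
  | zero => simp
  | succ n ih =>
    have h1 : x + ((n:ℝ)+1) = (x + n) + 1 := by ring
    have h2 : x + (n:ℝ) ≠ 0 := by positivity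
    push_cast
    rw [h1, Real.Gamma_add_one h2, ih, Finset.prod_range_succ]
    ring

lemma Gamma_add_half_le {x : ℝ} (hx : 0 < x) :
    Real.Gamma (x + 1/2) ≤ Real.sqrt x * Real.Gamma x := by
  have hΓx : 0 < Real.Gamma x := Real.Gamma_pos_of_pos hx
  have hΓx1 : 0 < Real.Gamma (x+1) := Real.Gamma_pos_of_pos (by linarith)
  have hΓh : 0 < Real.Gamma (x+1/2) := Real.Gamma_pos_of_pos (by linarith)
  have hc := Real.convexOn_log_Gamma.2 (Set.mem_Ioi.mpr hx)
    (Set.mem_Ioi.mpr (show (0:ℝ) < x + 1 by linarith))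
    (by norm_num : (0:ℝ) ≤ 1/2) (by norm_num : (0:ℝ) ≤ 1/2) (by norm_num)
  simp only [Function.comp_apply, smul_eq_mul] at hc
  have heq : (1/2:ℝ) * x + (1/2:ℝ) * (x+1) = x + 1/2 := by ring
  rw [heq] at hc
  have := Real.exp_le_exp.mpr hc
  rw [Real.exp_log hΓh, Real.exp_add] at this
  have e1 : Real.exp (1/2 * Real.log (Real.Gamma x)) = Real.sqrt (Real.Gamma x) := by
    rw [Real.sqrt_eq_rpow, Real.rpow_def_of_pos hΓx]; ring_nf
  have e2 : Real.exp (1/2 * Real.log (Real.Gamma (x+1))) = Real.sqrt (Real.Gamma (x+1)) := by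
    rw [Real.sqrt_eq_rpow, Real.rpow_def_of_pos hΓx1]; ring_nf
  rw [e1, e2] at this
  have hG1 : Real.Gamma (x+1) = x * Real.Gamma x := Real.Gamma_add_one (ne_of_gt hx)
  calc Real.Gamma (x+1/2) ≤ Real.sqrt (Real.Gamma x) * Real.sqrt (Real.Gamma (x+1)) := this
    _ = Real.sqrt x * Real.Gamma x := by
        rw [hG1, Real.sqrt_mul hx.le, ← mul_assoc,
          mul_comm (Real.sqrt (Real.Gamma x)) (Real.sqrt x), mul_assoc,
          Real.mul_self_sqrt hΓx.le]

lemma bern (x c : ℝ) (hx : 0 < x) (hc : 0 ≤ c) (n : ℕ) :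
    x^n * (x + (n+1)*c) ≤ (x+c)^(n+1) := by
  have hdiv : (0:ℝ) ≤ c/x := div_nonneg hc hx.le
  have h := one_add_mul_le_pow (by linarith : (-2:ℝ) ≤ c/x) (n+1)
  have hxpow : (0:ℝ) < x^(n+1) := pow_pos hx _
  have h2 : x^(n+1) * (1 + ((n:ℝ)+1) * (c/x)) ≤ x^(n+1) * (1+c/x)^(n+1) := by
    apply mul_le_mul_of_nonneg_left _ hxpow.le
    convert h using 2
    push_cast; ring
  calc x^n * (x + ((n:ℝ)+1)*c) = x^(n+1) * (1 + ((n:ℝ)+1) * (c/x)) := by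
        field_simp; ring
    _ ≤ x^(n+1) * (1+c/x)^(n+1) := h2
    _ = (x+c)^(n+1) := by
        rw [← mul_pow]; congr 1; field_simp

lemma le_of_sq_le_sq' {a b : ℝ} (hb : 0 ≤ b) (h : a^2 ≤ b^2) : a ≤ b := by
  nlinarith

noncomputable def PO (m : ℕ) : ℝ := ∏ j ∈ Finset.range m, (5 + 2*(j:ℝ))
noncomputable def PE (k : ℕ) : ℝ := ∏ j ∈ Finset.range k, (2*(j:ℝ) + 1)

lemma PO_pos (m : ℕ) : 0 < PO m :=
  Finset.prod_pos (fun j _ => by positivity)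

lemma PE_pos (k : ℕ) : 0 < PE k :=
  Finset.prod_pos (fun j _ => by positivity)

lemma PO_succ (m : ℕ) : PO (m+1) = PO m * (5 + 2*(m:ℝ)) := Finset.prod_range_succ _ _

lemma PE_succ (k : ℕ) : PE (k+1) = PE k * (2*(k:ℝ) + 1) := Finset.prod_range_succ _ _

lemma RODD (m : ℕ) (hm : 1 ≤ m) :
    (PO m)^2 * (Pa m 1)^2 ≤ 2^(2*m+1) * (2*(m:ℝ)+3)^(2*m+1) * ((m.factorial : ℝ))^2 := by
  induction m, hm using Nat.le_induction with
  | base => norm_num [PO, Pa]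
  | succ m hm ih =>
    have hq2 := Pa_one_ge_two m
    have hq0 : (0:ℝ) ≤ Pa m 1 := by linarith
    have hqs : Pa (m+1) 1 ≤ (2*(m:ℝ)+3) * Pa m 1 := by
      rw [Pa_one_succ]; push_cast; nlinarith
    have hqs0 : (0:ℝ) ≤ Pa (m+1) 1 := Pa_nonneg _ (by norm_num)
    have hPO : (0:ℝ) ≤ PO m := (PO_pos m).le
    have hm1 : (1:ℝ) ≤ (m:ℝ) := by exact_mod_cast hm
    have b1' : (2*(m:ℝ)+3)^(2*m) * (6*(m:ℝ)+5) ≤ (2*(m:ℝ)+5)^(2*m+1) := by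
      have h := bern (2*(m:ℝ)+3) 2 (by linarith) (by norm_num) (2*m)
      have e1 : ((2*m:ℕ):ℝ) = 2*(m:ℝ) := by push_cast; ring
      rw [e1] at h
      have e2 : 2*(m:ℝ)+3+2 = 2*(m:ℝ)+5 := by ring
      have e3 : 2*(m:ℝ)+3 + (2*(m:ℝ)+1)*2 = 6*(m:ℝ)+5 := by ring
      rw [e2, e3] at h
      exact h
    have b2 : (2*(m:ℝ)+3)^(2*m+3) ≤ 4*((m:ℝ)+1)^2 * (2*(m:ℝ)+5)^(2*m+1) := by
      have hcube : (2*(m:ℝ)+3)^3 ≤ 4*((m:ℝ)+1)^2*(6*(m:ℝ)+5) := by nlinarith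
      have hpp : (0:ℝ) ≤ (2*(m:ℝ)+3)^(2*m) := by positivity
      calc (2*(m:ℝ)+3)^(2*m+3) = (2*(m:ℝ)+3)^(2*m) * (2*(m:ℝ)+3)^3 := by
            rw [← pow_add]
        _ ≤ (2*(m:ℝ)+3)^(2*m) * (4*((m:ℝ)+1)^2*(6*(m:ℝ)+5)) :=
            mul_le_mul_of_nonneg_left hcube hpp
        _ = 4*((m:ℝ)+1)^2 * ((2*(m:ℝ)+3)^(2*m) * (6*(m:ℝ)+5)) := by ring
        _ ≤ 4*((m:ℝ)+1)^2 * (2*(m:ℝ)+5)^(2*m+1) := by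
            apply mul_le_mul_of_nonneg_left b1' (by positivity)
    calc (PO (m+1))^2 * (Pa (m+1) 1)^2
        = (PO m)^2 * (Pa (m+1) 1)^2 * (5+2*(m:ℝ))^2 := by rw [PO_succ]; ring
      _ ≤ (PO m)^2 * ((2*(m:ℝ)+3) * Pa m 1)^2 * (5+2*(m:ℝ))^2 := by
          apply mul_le_mul_of_nonneg_right _ (by positivity)
          apply mul_le_mul_of_nonneg_left _ (by positivity)
          exact pow_le_pow_left₀ hqs0 hqs 2
      _ = ((PO m)^2 * (Pa m 1)^2) * ((2*(m:ℝ)+3)^2 * (2*(m:ℝ)+5)^2) := by ring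
      _ ≤ (2^(2*m+1) * (2*(m:ℝ)+3)^(2*m+1) * ((m.factorial : ℝ))^2)
            * ((2*(m:ℝ)+3)^2 * (2*(m:ℝ)+5)^2) := by
          apply mul_le_mul_of_nonneg_right ih (by positivity)
      _ = 2^(2*m+1) * ((m.factorial : ℝ))^2 * (2*(m:ℝ)+5)^2 * (2*(m:ℝ)+3)^(2*m+3) := by
          rw [show 2*m+3 = (2*m+1)+2 by ring, pow_add]; ring
      _ ≤ 2^(2*m+1) * ((m.factorial : ℝ))^2 * (2*(m:ℝ)+5)^2
            * (4*((m:ℝ)+1)^2 * (2*(m:ℝ)+5)^(2*m+1)) := by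
          apply mul_le_mul_of_nonneg_left b2 (by positivity)
      _ = 2^(2*(m+1)+1) * (2*((m:ℝ)+1)+3)^(2*(m+1)+1) * (((m+1).factorial : ℝ))^2 := by
          rw [show 2*(m+1)+1 = (2*m+1)+2 by ring]
          rw [pow_add, pow_add, Nat.factorial_succ]
          push_cast
          ring_nf
      _ = 2^(2*(m+1)+1) * (2*((m+1:ℕ):ℝ)+3)^(2*(m+1)+1) * (((m+1).factorial : ℝ))^2 := by
          push_cast; ring_nf

lemma REVEN (m : ℕ) :
    (((m+2).factorial : ℝ)) * (Pa (m+1) 1 + 3*Pa m 1)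
      ≤ 12 * ((m:ℝ)+2)^(m+1) * PE (m+1) := by
  have key : ∀ n, 2 ≤ n → (((n+2).factorial : ℝ)) * (Pa (n+1) 1 + 3*Pa n 1)
      ≤ 12 * ((n:ℝ)+2)^(n+1) * PE (n+1) := by
    intro n hn
    induction n, hn using Nat.le_induction with
    | base => norm_num [PE, Pa, Finset.prod_range_succ, Nat.factorial]
    | succ m hm ih =>
      have hq2 := Pa_one_ge_two (m+1)
      have hq0 : (0:ℝ) ≤ Pa m 1 := Pa_nonneg _ (by norm_num)
      have hq1 : (0:ℝ) ≤ Pa (m+1) 1 := Pa_nonneg _ (by norm_num)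
      have hm2 : (2:ℝ) ≤ (m:ℝ) := by exact_mod_cast hm
      have hqs : Pa (m+2) 1 + 3*Pa (m+1) 1 ≤ (2*(m:ℝ)+8) * (Pa (m+1) 1 + 3*Pa m 1) := by
        rw [Pa_one_succ (m+1)]; push_cast; nlinarith
      have b' : ((m:ℝ)+2)^m * (2*(m:ℝ)+3) ≤ ((m:ℝ)+3)^(m+1) := by
        have h := bern ((m:ℝ)+2) 1 (by linarith) (by norm_num) m
        have e2 : (m:ℝ)+2+1 = (m:ℝ)+3 := by ring
        have e3 : (m:ℝ)+2 + ((m:ℝ)+1)*1 = 2*(m:ℝ)+3 := by ring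
        rw [e2, e3] at h
        exact h
      have hnum : (2*(m:ℝ)+8)*((m:ℝ)+2) ≤ (2*(m:ℝ)+3)^2 := by nlinarith
      have hfin : (2*(m:ℝ)+8) * ((m:ℝ)+2)^(m+1) ≤ ((m:ℝ)+3)^(m+1) * (2*(m:ℝ)+3) := by
        have h1 : (2*(m:ℝ)+8) * ((m:ℝ)+2)^(m+1) = ((m:ℝ)+2)^m * ((2*(m:ℝ)+8)*((m:ℝ)+2)) := by
          rw [pow_succ]; ring
        have h2 : (0:ℝ) ≤ ((m:ℝ)+2)^m := by positivity
        calc (2*(m:ℝ)+8) * ((m:ℝ)+2)^(m+1)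
            = ((m:ℝ)+2)^m * ((2*(m:ℝ)+8)*((m:ℝ)+2)) := h1
          _ ≤ ((m:ℝ)+2)^m * (2*(m:ℝ)+3)^2 := mul_le_mul_of_nonneg_left hnum h2
          _ = (((m:ℝ)+2)^m * (2*(m:ℝ)+3)) * (2*(m:ℝ)+3) := by ring
          _ ≤ ((m:ℝ)+3)^(m+1) * (2*(m:ℝ)+3) := by
              apply mul_le_mul_of_nonneg_right b' (by linarith)
      have hPE : (0:ℝ) < PE (m+1) := PE_pos _
      calc (((m+3).factorial : ℝ)) * (Pa (m+2) 1 + 3*Pa (m+1) 1)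
          = ((m:ℝ)+3) * (((m+2).factorial : ℝ)) * (Pa (m+2) 1 + 3*Pa (m+1) 1) := by
            rw [show m+3 = (m+2)+1 by ring, Nat.factorial_succ]; push_cast; ring
        _ ≤ ((m:ℝ)+3) * (((m+2).factorial : ℝ)) * ((2*(m:ℝ)+8) * (Pa (m+1) 1 + 3*Pa m 1)) := by
            apply mul_le_mul_of_nonneg_left hqs
            positivity
        _ = (2*(m:ℝ)+8) * ((m:ℝ)+3) * ((((m+2).factorial : ℝ)) * (Pa (m+1) 1 + 3*Pa m 1)) := by
            ring
        _ ≤ (2*(m:ℝ)+8) * ((m:ℝ)+3) * (12 * ((m:ℝ)+2)^(m+1) * PE (m+1)) := by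
            apply mul_le_mul_of_nonneg_left ih (by positivity)
        _ = 12 * ((m:ℝ)+3) * PE (m+1) * ((2*(m:ℝ)+8) * ((m:ℝ)+2)^(m+1)) := by ring
        _ ≤ 12 * ((m:ℝ)+3) * PE (m+1) * (((m:ℝ)+3)^(m+1) * (2*(m:ℝ)+3)) := by
            apply mul_le_mul_of_nonneg_left hfin (by positivity)
        _ = 12 * (((m:ℝ)+1)+2)^(m+1+1) * (PE (m+1) * (2*((m:ℝ)+1) + 1)) := by
            rw [pow_succ]; ring
        _ = 12 * (((m+1:ℕ):ℝ)+2)^(m+1+1) * PE (m+2) := by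
            rw [PE_succ (m+1)]; push_cast; ring
  match m with
  | 0 => norm_num [PE, Pa, Finset.prod_range_succ, Nat.factorial]
  | 1 => norm_num [PE, Pa, Finset.prod_range_succ, Nat.factorial]
  | (n+2) => exact key (n+2) (by omega)

lemma base_nonneg {β s : ℝ} (hβ : 0 < β) (hs : -(2*β) ≤ s) : 0 ≤ 1 + s/(2*β) := by
  have h2β : (0:ℝ) < 2*β := by linarith
  have : -1 ≤ s/(2*β) := by rw [le_div_iff₀ h2β]; linarith
  linarith

lemma cont_rpow {β : ℝ} (hβ : 0 < β) : Continuous fun s : ℝ => (1+s/(2*β))^β := by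
  have h : Continuous fun s : ℝ => 1 + s/(2*β) := by fun_prop
  refine continuous_iff_continuousAt.mpr fun s => ?_
  exact (Real.continuousAt_rpow_const _ β (Or.inr hβ.le)).comp h.continuousAt

lemma f_cont (n : ℕ) (β A t : ℝ) (hβ : 0 < β) :
    Continuous fun s : ℝ => (Real.sqrt (t-s)+A)^n * (1+s/(2*β))^β :=
  (((Real.continuous_sqrt.comp (continuous_const.sub continuous_id)).add
    continuous_const).pow n).mul (cont_rpow hβ)

lemma exp_poly_cont (m : ℕ) (t : ℝ) :
    Continuous fun s : ℝ => Real.exp (s/2) * (1+t-s)^m :=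
  (Real.continuous_exp.comp (continuous_id.div_const 2)).mul
    ((continuous_const.sub continuous_id).pow m)

lemma J_odd (m : ℕ) {β A t : ℝ} (hβ : 1 < β) (hA : 0 < A) :
    ∫ s in Set.Icc (-(2*β)) t, (Real.sqrt (t-s)+A)^(2*m) * (1+s/(2*β))^β
      ≤ (A+1)^(2*m) * (Real.exp (t/2) * Pa m 1) := by
  have hβ0 : (0:ℝ) < β := by linarith
  have hRHS : (0:ℝ) ≤ (A+1)^(2*m) * (Real.exp (t/2) * Pa m 1) := by
    have := Pa_one_ge_two m
    have h1 : (0:ℝ) ≤ Real.exp (t/2) * Pa m 1 := by positivity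
    positivity
  rcases le_or_gt (-(2*β)) t with hta | hta
  · have hfg : ∀ s ∈ Set.Icc (-(2*β)) t,
        (Real.sqrt (t-s)+A)^(2*m) * (1+s/(2*β))^β
          ≤ (A+1)^(2*m) * (Real.exp (s/2) * (1+t-s)^m) := by
      intro s hs
      obtain ⟨h1, h2⟩ := hs
      have hr : (0:ℝ) ≤ t - s := by linarith
      have hsq := sqrtA_le hA hr
      rw [show (1:ℝ)+(t-s) = 1+t-s by ring] at hsq
      have hsnn : (0:ℝ) ≤ Real.sqrt (t-s) + A := by positivity
      have hpow : (Real.sqrt (t-s)+A)^(2*m) ≤ ((A+1)*Real.sqrt (1+t-s))^(2*m) :=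
        pow_le_pow_left₀ hsnn hsq _
      have hsq2 : ((A+1)*Real.sqrt (1+t-s))^(2*m) = (A+1)^(2*m) * (1+t-s)^m := by
        rw [mul_pow]
        congr 1
        rw [pow_mul, Real.sq_sqrt (by linarith : (0:ℝ) ≤ 1+t-s)]
      have hrp := rpow_exp_le hβ h1
      have hrpnn : (0:ℝ) ≤ (1+s/(2*β))^β := Real.rpow_nonneg (base_nonneg hβ0 h1) β
      calc (Real.sqrt (t-s)+A)^(2*m) * (1+s/(2*β))^β
          ≤ ((A+1)*Real.sqrt (1+t-s))^(2*m) * Real.exp (s/2) :=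
            mul_le_mul hpow hrp hrpnn (by positivity)
        _ = (A+1)^(2*m) * (Real.exp (s/2) * (1+t-s)^m) := by rw [hsq2]; ring
    have hfint : IntegrableOn (fun s : ℝ => (Real.sqrt (t-s)+A)^(2*m) * (1+s/(2*β))^β)
        (Set.Icc (-(2*β)) t) := (f_cont (2*m) β A t hβ0).integrableOn_Icc
    have hgint : IntegrableOn (fun s : ℝ => (A+1)^(2*m) * (Real.exp (s/2) * (1+t-s)^m))
        (Set.Icc (-(2*β)) t) :=
      (continuous_const.mul (exp_poly_cont m t)).integrableOn_Icc
    calc ∫ s in Set.Icc (-(2*β)) t, (Real.sqrt (t-s)+A)^(2*m) * (1+s/(2*β))^β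
        ≤ ∫ s in Set.Icc (-(2*β)) t, (A+1)^(2*m) * (Real.exp (s/2) * (1+t-s)^m) :=
          setIntegral_mono_on hfint hgint measurableSet_Icc hfg
      _ = (A+1)^(2*m) * ∫ s in Set.Icc (-(2*β)) t, (Real.exp (s/2) * (1+t-s)^m) :=
          integral_const_mul _ _
      _ ≤ (A+1)^(2*m) * (Real.exp (t/2) * Pa m 1) :=
          mul_le_mul_of_nonneg_left (integral_bound m hta) (by positivity)
  · rw [Set.Icc_eq_empty (by linarith)]
    simpa using hRHS

lemma J_even (m : ℕ) {β A t : ℝ} (hβ : 1 < β) (hA : 0 < A) :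
    ∫ s in Set.Icc (-(2*β)) t, (Real.sqrt (t-s)+A)^(2*m+1) * (1+s/(2*β))^β
      ≤ (A+1)^(2*m+1) * ((2*Real.sqrt 3)⁻¹
          * (Real.exp (t/2) * (Pa (m+1) 1 + 3 * Pa m 1))) := by
  have hβ0 : (0:ℝ) < β := by linarith
  have hs3 : (0:ℝ) < Real.sqrt 3 := Real.sqrt_pos.mpr (by norm_num)
  have hRHS : (0:ℝ) ≤ (A+1)^(2*m+1) * ((2*Real.sqrt 3)⁻¹
      * (Real.exp (t/2) * (Pa (m+1) 1 + 3 * Pa m 1))) := by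
    have h1 := Pa_one_ge_two m
    have h2 := Pa_one_ge_two (m+1)
    have h3 : (0:ℝ) ≤ Real.exp (t/2) * (Pa (m+1) 1 + 3 * Pa m 1) := by positivity
    positivity
  rcases le_or_gt (-(2*β)) t with hta | hta
  · have hfg : ∀ s ∈ Set.Icc (-(2*β)) t,
        (Real.sqrt (t-s)+A)^(2*m+1) * (1+s/(2*β))^β
          ≤ (A+1)^(2*m+1) * ((2*Real.sqrt 3)⁻¹
              * (Real.exp (s/2) * (1+t-s)^(m+1) + 3 * (Real.exp (s/2) * (1+t-s)^m))) := by
      intro s hs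
      obtain ⟨h1, h2⟩ := hs
      have hr : (0:ℝ) ≤ t - s := by linarith
      have hu : (0:ℝ) ≤ 1+t-s := by linarith
      have hsq := sqrtA_le hA hr
      rw [show (1:ℝ)+(t-s) = 1+t-s by ring] at hsq
      have hsnn : (0:ℝ) ≤ Real.sqrt (t-s) + A := by positivity
      have hpow : (Real.sqrt (t-s)+A)^(2*m+1) ≤ ((A+1)*Real.sqrt (1+t-s))^(2*m+1) :=
        pow_le_pow_left₀ hsnn hsq _
      have hsqs := sqrt_one_add_le hr
      rw [show (1:ℝ)+(t-s) = 1+t-s by ring] at hsqs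
      have hsqrt_le : Real.sqrt (1+t-s) ≤ (t-s+4) * (2*Real.sqrt 3)⁻¹ := by
        rw [le_mul_inv_iff₀ (by positivity)]
        linarith
      have hkey : ((A+1)*Real.sqrt (1+t-s))^(2*m+1)
          ≤ (A+1)^(2*m+1) * ((2*Real.sqrt 3)⁻¹ * ((1+t-s)^(m+1) + 3*(1+t-s)^m)) := by
        have e1 : ((A+1)*Real.sqrt (1+t-s))^(2*m+1)
            = (A+1)^(2*m+1) * ((1+t-s)^m * Real.sqrt (1+t-s)) := by
          rw [mul_pow]
          congr 1
          rw [pow_succ, pow_mul, Real.sq_sqrt hu]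
        rw [e1]
        apply mul_le_mul_of_nonneg_left _ (by positivity)
        calc (1+t-s)^m * Real.sqrt (1+t-s)
            ≤ (1+t-s)^m * ((t-s+4) * (2*Real.sqrt 3)⁻¹) :=
              mul_le_mul_of_nonneg_left hsqrt_le (by positivity)
          _ = (2*Real.sqrt 3)⁻¹ * ((1+t-s)^(m+1) + 3*(1+t-s)^m) := by
              rw [pow_succ]; ring
      have hrp := rpow_exp_le hβ h1
      have hrpnn : (0:ℝ) ≤ (1+s/(2*β))^β := Real.rpow_nonneg (base_nonneg hβ0 h1) β
      calc (Real.sqrt (t-s)+A)^(2*m+1) * (1+s/(2*β))^β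
          ≤ ((A+1)*Real.sqrt (1+t-s))^(2*m+1) * Real.exp (s/2) :=
            mul_le_mul hpow hrp hrpnn (by positivity)
        _ ≤ ((A+1)^(2*m+1) * ((2*Real.sqrt 3)⁻¹ * ((1+t-s)^(m+1) + 3*(1+t-s)^m)))
              * Real.exp (s/2) :=
            mul_le_mul_of_nonneg_right hkey (Real.exp_pos _).le
        _ = (A+1)^(2*m+1) * ((2*Real.sqrt 3)⁻¹
              * (Real.exp (s/2) * (1+t-s)^(m+1) + 3 * (Real.exp (s/2) * (1+t-s)^m))) := by
            ring
    have hfint : IntegrableOn (fun s : ℝ => (Real.sqrt (t-s)+A)^(2*m+1) * (1+s/(2*β))^β)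
        (Set.Icc (-(2*β)) t) := (f_cont (2*m+1) β A t hβ0).integrableOn_Icc
    have hgc : Continuous (fun s : ℝ => (A+1)^(2*m+1) * ((2*Real.sqrt 3)⁻¹
        * (Real.exp (s/2) * (1+t-s)^(m+1) + 3 * (Real.exp (s/2) * (1+t-s)^m)))) :=
      continuous_const.mul (continuous_const.mul
        ((exp_poly_cont (m+1) t).add (continuous_const.mul (exp_poly_cont m t))))
    have hgint : IntegrableOn (fun s : ℝ => (A+1)^(2*m+1) * ((2*Real.sqrt 3)⁻¹
        * (Real.exp (s/2) * (1+t-s)^(m+1) + 3 * (Real.exp (s/2) * (1+t-s)^m))))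
        (Set.Icc (-(2*β)) t) := hgc.integrableOn_Icc
    have hsum : ∫ s in Set.Icc (-(2*β)) t,
        (Real.exp (s/2) * (1+t-s)^(m+1) + 3 * (Real.exp (s/2) * (1+t-s)^m))
          ≤ Real.exp (t/2) * (Pa (m+1) 1 + 3 * Pa m 1) := by
      rw [MeasureTheory.integral_add ((exp_poly_cont (m+1) t).integrableOn_Icc)
        ((by fun_prop :
          Continuous fun s : ℝ => 3 * (Real.exp (s/2) * (1+t-s)^m)).integrableOn_Icc),
        integral_const_mul]
      have i1 := integral_bound (m+1) hta
      have i2 := integral_bound m hta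
      nlinarith [i1, i2]
    calc ∫ s in Set.Icc (-(2*β)) t, (Real.sqrt (t-s)+A)^(2*m+1) * (1+s/(2*β))^β
        ≤ ∫ s in Set.Icc (-(2*β)) t, (A+1)^(2*m+1) * ((2*Real.sqrt 3)⁻¹
            * (Real.exp (s/2) * (1+t-s)^(m+1) + 3 * (Real.exp (s/2) * (1+t-s)^m))) :=
          setIntegral_mono_on hfint hgint measurableSet_Icc hfg
      _ = ((A+1)^(2*m+1) * (2*Real.sqrt 3)⁻¹) * ∫ s in Set.Icc (-(2*β)) t,
            (Real.exp (s/2) * (1+t-s)^(m+1) + 3 * (Real.exp (s/2) * (1+t-s)^m)) := by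
          rw [← integral_const_mul]
          congr 1; funext s; ring
      _ ≤ ((A+1)^(2*m+1) * (2*Real.sqrt 3)⁻¹)
            * (Real.exp (t/2) * (Pa (m+1) 1 + 3 * Pa m 1)) := by
          apply mul_le_mul_of_nonneg_left hsum (by positivity)
      _ = (A+1)^(2*m+1) * ((2*Real.sqrt 3)⁻¹
            * (Real.exp (t/2) * (Pa (m+1) 1 + 3 * Pa m 1))) := by ring
  · rw [Set.Icc_eq_empty (by linarith)]
    simpa using hRHS

lemma prod_two_add (k : ℕ) :
    ∏ j ∈ Finset.range k, (2+(j:ℝ)) = (((k+1).factorial : ℝ)) := by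
  induction k with
  | zero => simp
  | succ k ih =>
    have hfs : (k+1+1).factorial = (k+1+1) * (k+1).factorial := Nat.factorial_succ _
    rw [Finset.prod_range_succ, ih, hfs]
    push_cast
    ring

lemma odd_main (m : ℕ) (hm : 1 ≤ m) (β A t : ℝ) (hβ : 1 < β) (hA : 0 < A) :
    cBeta (2*m+1) β * Real.pi ^ ((((2*m+1:ℕ) : ℝ) - 1) / 2) /
        ((2 * β) ^ (((2*m+1:ℕ) : ℝ) / 2) * Real.Gamma ((((2*m+1:ℕ) : ℝ) + 1) / 2)) *
        ∫ s in Set.Icc (-(2 * β)) t,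
          (Real.sqrt (t - s) + A) ^ ((2*m+1) - 1) * (1 + s / (2 * β)) ^ β
      < 2 * ((((2*m+1:ℕ) : ℝ)) / 2 + 1) ^ ((((2*m+1:ℕ) : ℝ)) / 2) / Real.sqrt Real.pi *
          (A + 1) ^ ((2*m+1) - 1) * Real.exp (t / 2) := by
  have hβ0 : (0:ℝ) < β := by linarith
  have h2β : (0:ℝ) < 2*β := by linarith
  have hπ := Real.pi_pos
  have hsπ : (0:ℝ) < Real.sqrt π := Real.sqrt_pos.mpr hπ
  have hs2β : (0:ℝ) < Real.sqrt (2*β) := Real.sqrt_pos.mpr h2β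
  have hΓβ : (0:ℝ) < Real.Gamma (β+1) := Real.Gamma_pos_of_pos (by linarith)
  have hΓ32 : (0:ℝ) < Real.Gamma (β+3/2) := Real.Gamma_pos_of_pos (by linarith)
  have hF : (0:ℝ) < (m.factorial : ℝ) := by exact_mod_cast m.factorial_pos
  have hc : ((2*m+1:ℕ):ℝ) = 2*(m:ℝ)+1 := by push_cast; ring
  have hsplit : ∀ x : ℝ, 0 < x → x ^ ((m:ℝ)+1/2) = x^m * Real.sqrt x := by
    intro x hx
    rw [Real.rpow_add hx, Real.rpow_natCast, ← Real.sqrt_eq_rpow]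
  simp only [Nat.add_sub_cancel]
  -- the constant K
  have hKval : cBeta (2*m+1) β * Real.pi ^ ((((2*m+1:ℕ) : ℝ) - 1) / 2) /
      ((2 * β) ^ (((2*m+1:ℕ) : ℝ) / 2) * Real.Gamma ((((2*m+1:ℕ) : ℝ) + 1) / 2))
      = Real.Gamma ((β+3/2)+(m:ℝ)) / (Real.Gamma (β+1) * ((2*β)^m * Real.sqrt (2*β)))
        * (Real.sqrt π * (m.factorial:ℝ))⁻¹ := by
    rw [cBeta, hc]
    rw [show (2*(m:ℝ)+1-1)/2 = ((m:ℕ):ℝ) by push_cast; ring,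
        show (2*(m:ℝ)+1)/2 = (m:ℝ)+1/2 by ring,
        show (2*(m:ℝ)+1+1)/2 = (m:ℝ)+1 by ring,
        show (m:ℝ)+1/2+β+1 = (β+3/2)+(m:ℝ) by ring,
        Real.Gamma_nat_eq_factorial,
        hsplit _ h2β, hsplit _ hπ, Real.rpow_natCast]
    have h1 : (Real.pi:ℝ)^m ≠ 0 := by positivity
    have h2 : Real.sqrt π ≠ 0 := ne_of_gt hsπ
    have h3 : Real.Gamma (β+1) ≠ 0 := ne_of_gt hΓβ
    have h4 : (2*β)^m ≠ 0 := by positivity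
    have h5 : Real.sqrt (2*β) ≠ 0 := ne_of_gt hs2β
    have h6 : (m.factorial : ℝ) ≠ 0 := ne_of_gt hF
    field_simp
  -- the RHS constant
  have hRHSval : 2 * ((((2*m+1:ℕ) : ℝ)) / 2 + 1) ^ ((((2*m+1:ℕ) : ℝ)) / 2) / Real.sqrt Real.pi
      = 2 * (((m:ℝ)+3/2)^m * Real.sqrt ((m:ℝ)+3/2)) / Real.sqrt π := by
    rw [hc, show (2*(m:ℝ)+1)/2 = (m:ℝ)+1/2 by ring,
        show (m:ℝ)+1/2+1 = (m:ℝ)+3/2 by ring,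
        hsplit _ (by positivity : (0:ℝ) < (m:ℝ)+3/2)]
  rw [hKval, hRHSval]
  -- strict bound for the Gamma ratio
  have hprod_pos : (0:ℝ) < ∏ j ∈ Finset.range m, (β+3/2+(j:ℝ)) :=
    Finset.prod_pos (fun j _ => by positivity)
  have hprodle : ∏ j ∈ Finset.range m, (β+3/2+(j:ℝ)) ≤ (β/2)^m * PO m := by
    have e : ∏ j ∈ Finset.range m, (β/2*(5+2*(j:ℝ))) = (β/2)^m * PO m := by
      rw [Finset.prod_mul_distrib, Finset.prod_const, Finset.card_range, PO]
    rw [← e]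
    apply Finset.prod_le_prod
    · intro j _; positivity
    · intro j _
      have hj : (0:ℝ) ≤ (j:ℝ) := Nat.cast_nonneg j
      nlinarith
  have hWendel : Real.Gamma (β+3/2) < Real.sqrt (2*β) * Real.Gamma (β+1) := by
    have h1 : Real.Gamma ((β+1)+1/2) ≤ Real.sqrt (β+1) * Real.Gamma (β+1) :=
      Gamma_add_half_le (by linarith)
    rw [show (β+1)+1/2 = β+3/2 by ring] at h1
    have h2 : Real.sqrt (β+1) < Real.sqrt (2*β) :=
      Real.sqrt_lt_sqrt (by linarith) (by linarith)
    nlinarith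
  have hR : Real.Gamma ((β+3/2)+(m:ℝ)) / (Real.Gamma (β+1) * ((2*β)^m * Real.sqrt (2*β)))
      < PO m / 4^m := by
    rw [div_lt_div_iff₀ (by positivity) (by positivity)]
    rw [Gamma_add_nat' (show (0:ℝ) < β+3/2 by linarith) m]
    have hstep1 : Real.Gamma (β+3/2) * (∏ j ∈ Finset.range m, (β+3/2+(j:ℝ))) * (4:ℝ)^m
        < (Real.sqrt (2*β) * Real.Gamma (β+1)) * (∏ j ∈ Finset.range m, (β+3/2+(j:ℝ)))
          * (4:ℝ)^m := by
      apply mul_lt_mul_of_pos_right (mul_lt_mul_of_pos_right hWendel hprod_pos) (by positivity)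
    have hstep2 : (Real.sqrt (2*β) * Real.Gamma (β+1))
          * (∏ j ∈ Finset.range m, (β+3/2+(j:ℝ))) * (4:ℝ)^m
        ≤ (Real.sqrt (2*β) * Real.Gamma (β+1)) * ((β/2)^m * PO m) * (4:ℝ)^m := by
      apply mul_le_mul_of_nonneg_right _ (by positivity)
      exact mul_le_mul_of_nonneg_left hprodle (by positivity)
    have hstep3 : (Real.sqrt (2*β) * Real.Gamma (β+1)) * ((β/2)^m * PO m) * (4:ℝ)^m
        = PO m * (Real.Gamma (β+1) * ((2*β)^m * Real.sqrt (2*β))) := by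
      have h44 : (β/2)^m * (4:ℝ)^m = (2*β)^m := by
        rw [← mul_pow]; congr 1; ring
      calc (Real.sqrt (2*β) * Real.Gamma (β+1)) * ((β/2)^m * PO m) * (4:ℝ)^m
          = PO m * (Real.Gamma (β+1) * (((β/2)^m * (4:ℝ)^m) * Real.sqrt (2*β))) := by ring
        _ = PO m * (Real.Gamma (β+1) * ((2*β)^m * Real.sqrt (2*β))) := by rw [h44]
    linarith
  -- the integral bound
  have hJ := J_odd m hβ hA (t := t)
  have hPa2 := Pa_one_ge_two m
  have hJb_pos : (0:ℝ) < (A+1)^(2*m) * (Real.exp (t/2) * Pa m 1) := by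
    apply mul_pos (by positivity)
    exact mul_pos (Real.exp_pos _) (by linarith)
  have hR0 : (0:ℝ) ≤ Real.Gamma ((β+3/2)+(m:ℝ))
      / (Real.Gamma (β+1) * ((2*β)^m * Real.sqrt (2*β))) * (Real.sqrt π * (m.factorial:ℝ))⁻¹ := by
    apply mul_nonneg _ (by positivity)
    apply div_nonneg _ (by positivity)
    exact (Real.Gamma_pos_of_pos (by positivity)).le
  -- final constant comparison
  have hss : (Real.sqrt ((m:ℝ)+3/2))^2 = (m:ℝ)+3/2 := Real.sq_sqrt (by positivity)
  have e1 : (2*(m:ℝ)+3)^(2*m+1) = ((m:ℝ)+3/2)^(2*m+1) * 2^(2*m+1) := by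
    rw [← mul_pow]; congr 1; ring
  have e2 : ((m:ℝ)+3/2)^(2*m+1) = (((m:ℝ)+3/2)^m)^2 * ((m:ℝ)+3/2) := by
    rw [show 2*m+1 = m*2+1 by ring, pow_succ, pow_mul]
  have e3 : (2:ℝ)^(2*m+1) = 2*(4^m) := by
    rw [pow_succ, pow_mul]
    norm_num
    ring
  have hsq : (PO m * Pa m 1)^2
      ≤ (2*(((m:ℝ)+3/2)^m) * Real.sqrt ((m:ℝ)+3/2) * (4^m * (m.factorial:ℝ)))^2 := by
    have hR2 := RODD m hm
    calc (PO m * Pa m 1)^2 = (PO m)^2*(Pa m 1)^2 := by ring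
      _ ≤ 2^(2*m+1) * (2*(m:ℝ)+3)^(2*m+1) * ((m.factorial:ℝ))^2 := hR2
      _ = (2*(((m:ℝ)+3/2)^m) * Real.sqrt ((m:ℝ)+3/2) * (4^m * (m.factorial:ℝ)))^2 := by
          have e4 : (2*(((m:ℝ)+3/2)^m) * Real.sqrt ((m:ℝ)+3/2) * (4^m * (m.factorial:ℝ)))^2
              = 4*((((m:ℝ)+3/2)^m)^2*((Real.sqrt ((m:ℝ)+3/2))^2)*(4^m)^2*((m.factorial:ℝ))^2) := by
            ring
          rw [e1, e2, e3, e4, hss]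
          ring
  have hle := le_of_sq_le_sq' (by positivity) hsq
  have hcon : PO m / 4^m * (Real.sqrt π * (m.factorial:ℝ))⁻¹ * Pa m 1
      ≤ 2*(((m:ℝ)+3/2)^m * Real.sqrt ((m:ℝ)+3/2))/Real.sqrt π := by
    have e : PO m / 4^m * (Real.sqrt π * (m.factorial:ℝ))⁻¹ * Pa m 1
        = (PO m * Pa m 1)/((4:ℝ)^m*(Real.sqrt π*(m.factorial:ℝ))) := by
      field_simp
    rw [e, div_le_div_iff₀ (by positivity) (by positivity : (0:ℝ) < Real.sqrt π)]
    calc (PO m * Pa m 1)*Real.sqrt π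
        ≤ (2*(((m:ℝ)+3/2)^m)*Real.sqrt ((m:ℝ)+3/2)*((4:ℝ)^m*(m.factorial:ℝ)))*Real.sqrt π :=
          mul_le_mul_of_nonneg_right hle (by positivity)
      _ = 2*(((m:ℝ)+3/2)^m*Real.sqrt ((m:ℝ)+3/2))*((4:ℝ)^m*(Real.sqrt π*(m.factorial:ℝ))) := by
          ring
  -- chain everything
  calc Real.Gamma (β+3/2+(m:ℝ)) / (Real.Gamma (β+1) * ((2*β)^m * Real.sqrt (2*β)))
        * (Real.sqrt π * (m.factorial:ℝ))⁻¹
        * ∫ s in Set.Icc (-(2*β)) t, (Real.sqrt (t-s)+A)^(2*m) * (1+s/(2*β))^β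
      ≤ Real.Gamma (β+3/2+(m:ℝ)) / (Real.Gamma (β+1) * ((2*β)^m * Real.sqrt (2*β)))
        * (Real.sqrt π * (m.factorial:ℝ))⁻¹
        * ((A+1)^(2*m) * (Real.exp (t/2) * Pa m 1)) := mul_le_mul_of_nonneg_left hJ hR0
    _ < PO m / 4^m * (Real.sqrt π * (m.factorial:ℝ))⁻¹
        * ((A+1)^(2*m) * (Real.exp (t/2) * Pa m 1)) := by
        apply mul_lt_mul_of_pos_right _ hJb_pos
        exact mul_lt_mul_of_pos_right hR (by positivity)
    _ ≤ 2 * (((m:ℝ)+3/2)^m * Real.sqrt ((m:ℝ)+3/2)) / Real.sqrt π * (A+1)^(2*m)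
        * Real.exp (t/2) := by
        have h := mul_le_mul_of_nonneg_right hcon
          (show (0:ℝ) ≤ (A+1)^(2*m)*Real.exp (t/2) by positivity)
        calc PO m / 4^m * (Real.sqrt π * (m.factorial:ℝ))⁻¹
              * ((A+1)^(2*m) * (Real.exp (t/2) * Pa m 1))
            = (PO m / 4^m * (Real.sqrt π * (m.factorial:ℝ))⁻¹ * Pa m 1)
              * ((A+1)^(2*m)*Real.exp (t/2)) := by ring
          _ ≤ (2*(((m:ℝ)+3/2)^m * Real.sqrt ((m:ℝ)+3/2))/Real.sqrt π)
              * ((A+1)^(2*m)*Real.exp (t/2)) := h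
          _ = 2 * (((m:ℝ)+3/2)^m * Real.sqrt ((m:ℝ)+3/2)) / Real.sqrt π * (A+1)^(2*m)
              * Real.exp (t/2) := by ring


lemma even_main (m : ℕ) (β A t : ℝ) (hβ : 1 < β) (hA : 0 < A) :
    cBeta (2*m+2) β * Real.pi ^ ((((2*m+2:ℕ) : ℝ) - 1) / 2) /
        ((2 * β) ^ (((2*m+2:ℕ) : ℝ) / 2) * Real.Gamma ((((2*m+2:ℕ) : ℝ) + 1) / 2)) *
        ∫ s in Set.Icc (-(2 * β)) t,
          (Real.sqrt (t - s) + A) ^ ((2*m+2) - 1) * (1 + s / (2 * β)) ^ β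
      < 2 * ((((2*m+2:ℕ) : ℝ)) / 2 + 1) ^ ((((2*m+2:ℕ) : ℝ)) / 2) / Real.sqrt Real.pi *
          (A + 1) ^ ((2*m+2) - 1) * Real.exp (t / 2) := by
  have hβ0 : (0:ℝ) < β := by linarith
  have h2β : (0:ℝ) < 2*β := by linarith
  have hπ := Real.pi_pos
  have hsπ : (0:ℝ) < Real.sqrt π := Real.sqrt_pos.mpr hπ
  have hs3 : (0:ℝ) < Real.sqrt 3 := Real.sqrt_pos.mpr (by norm_num)
  have hΓβ : (0:ℝ) < Real.Gamma (β+1) := Real.Gamma_pos_of_pos (by linarith)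
  have hF : (0:ℝ) < ((m+2).factorial : ℝ) := by exact_mod_cast (m+2).factorial_pos
  have hPE : (0:ℝ) < PE (m+1) := PE_pos _
  have hc : ((2*m+2:ℕ):ℝ) = 2*(m:ℝ)+2 := by push_cast; ring
  have hcast1 : ((m+1:ℕ):ℝ) = (m:ℝ)+1 := by push_cast; ring
  have hn1 : ∀ x : ℝ, x ^ ((m:ℝ)+1) = x^(m+1) := by
    intro x
    rw [← hcast1, Real.rpow_natCast]
  have hsplit : ∀ x : ℝ, 0 < x → x ^ ((m:ℝ)+1/2) = x^m * Real.sqrt x := by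
    intro x hx
    rw [Real.rpow_add hx, Real.rpow_natCast, ← Real.sqrt_eq_rpow]
  rw [show (2*m+2)-1 = 2*m+1 by omega]
  -- Gamma ((d+1)/2) value
  have hGhalf : Real.Gamma ((2*(m:ℝ)+2+1)/2) = Real.sqrt π * (PE (m+1) * (1/2)^(m+1)) := by
    have h1 : (2*(m:ℝ)+2+1)/2 = 1/2 + ((m+1:ℕ):ℝ) := by rw [hcast1]; ring
    rw [h1, Gamma_add_nat' (by norm_num : (0:ℝ) < 1/2) (m+1), Real.Gamma_one_half_eq]
    congr 1
    have h2 : ∀ j ∈ Finset.range (m+1), (1/2 + (j:ℝ)) = (2*(j:ℝ)+1) * (1/2) := by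
      intro j _; ring
    rw [Finset.prod_congr rfl h2, Finset.prod_mul_distrib, Finset.prod_const,
      Finset.card_range, PE]
  -- the constant K
  have hKval : cBeta (2*m+2) β * Real.pi ^ ((((2*m+2:ℕ) : ℝ) - 1) / 2) /
      ((2 * β) ^ (((2*m+2:ℕ) : ℝ) / 2) * Real.Gamma ((((2*m+2:ℕ) : ℝ) + 1) / 2))
      = Real.Gamma ((β+1)+((m:ℝ)+1)) / (Real.Gamma (β+1) * (2*β)^(m+1))
        * (2^(m+1) / (π * PE (m+1))) := by
    rw [cBeta, hc]
    rw [show (2*(m:ℝ)+2-1)/2 = (m:ℝ)+1/2 by ring,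
        show (2*(m:ℝ)+2)/2 = (m:ℝ)+1 by ring,
        show (m:ℝ)+1+β+1 = (β+1)+((m:ℝ)+1) by ring,
        hGhalf, hn1 (2*β), hn1 π, hsplit _ hπ]
    have hππ : Real.sqrt π * Real.sqrt π = π := Real.mul_self_sqrt hπ.le
    have h1 : (Real.pi:ℝ)^m ≠ 0 := by positivity
    have h2 : Real.sqrt π ≠ 0 := ne_of_gt hsπ
    have h3 : Real.Gamma (β+1) ≠ 0 := ne_of_gt hΓβ
    have h4 : (2*β)^(m+1) ≠ 0 := by positivity
    have h5 : PE (m+1) ≠ 0 := ne_of_gt hPE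
    field_simp
    rw [pow_succ]
    ring
    rw [mul_assoc _ ((1/2:ℝ)^m), ← mul_pow]; norm_num
  -- the RHS constant
  have hRHSval : 2 * ((((2*m+2:ℕ) : ℝ)) / 2 + 1) ^ ((((2*m+2:ℕ) : ℝ)) / 2) / Real.sqrt Real.pi
      = 2 * ((m:ℝ)+2)^(m+1) / Real.sqrt π := by
    rw [hc, show (2*(m:ℝ)+2)/2 = (m:ℝ)+1 by ring,
        show (m:ℝ)+1+1 = (m:ℝ)+2 by ring, hn1 ((m:ℝ)+2)]
  rw [hKval, hRHSval]
  -- strict ratio bound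
  have hR : Real.Gamma ((β+1)+((m:ℝ)+1)) / (Real.Gamma (β+1) * (2*β)^(m+1))
      < ((m+2).factorial : ℝ) / 2^(m+1) := by
    rw [div_lt_div_iff₀ (by positivity) (by positivity)]
    have hg : Real.Gamma ((β+1)+((m:ℝ)+1))
        = Real.Gamma (β+1) * ∏ j ∈ Finset.range (m+1), (β+1+(j:ℝ)) := by
      have := Gamma_add_nat' (show (0:ℝ) < β+1 by linarith) (m+1)
      rwa [hcast1] at this
    rw [hg]
    have hstrict : ∏ j ∈ Finset.range (m+1), (β+1+(j:ℝ))
        < ∏ j ∈ Finset.range (m+1), (β*(2+(j:ℝ))) := by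
      apply Finset.prod_lt_prod_of_nonempty
      · intro j _; positivity
      · intro j _
        have hj : (0:ℝ) ≤ (j:ℝ) := Nat.cast_nonneg j
        nlinarith
      · exact Finset.nonempty_range_iff.mpr (by omega)
    have hprodeq : ∏ j ∈ Finset.range (m+1), (β*(2+(j:ℝ)))
        = β^(m+1) * ((m+2).factorial : ℝ) := by
      rw [Finset.prod_mul_distrib, Finset.prod_const, Finset.card_range,
        prod_two_add (m+1), show m+1+1 = m+2 from rfl]
    have h2b : (2*β)^(m+1) = 2^(m+1) * β^(m+1) := mul_pow 2 β (m+1)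
    have hchain : Real.Gamma (β+1) * (∏ j ∈ Finset.range (m+1), (β+1+(j:ℝ))) * 2^(m+1)
        < Real.Gamma (β+1) * (β^(m+1) * ((m+2).factorial : ℝ)) * 2^(m+1) := by
      apply mul_lt_mul_of_pos_right _ (by positivity)
      rw [← hprodeq]
      exact mul_lt_mul_of_pos_left hstrict hΓβ
    have heq2 : Real.Gamma (β+1) * (β^(m+1) * ((m+2).factorial : ℝ)) * 2^(m+1)
        = ((m+2).factorial : ℝ) * (Real.Gamma (β+1) * (2*β)^(m+1)) := by
      rw [h2b]; ring
    linarith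
  -- the integral bound
  have hJ := J_even m hβ hA (t := t)
  have hPa2 := Pa_one_ge_two m
  have hPa2' := Pa_one_ge_two (m+1)
  have hS : (0:ℝ) < Pa (m+1) 1 + 3 * Pa m 1 := by linarith
  have hJb_pos : (0:ℝ) < (A+1)^(2*m+1) * ((2*Real.sqrt 3)⁻¹
      * (Real.exp (t/2) * (Pa (m+1) 1 + 3 * Pa m 1))) := by
    apply mul_pos (by positivity)
    apply mul_pos (by positivity)
    exact mul_pos (Real.exp_pos _) hS
  have hR0 : (0:ℝ) ≤ Real.Gamma ((β+1)+((m:ℝ)+1)) / (Real.Gamma (β+1) * (2*β)^(m+1))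
      * (2^(m+1) / (π * PE (m+1))) := by
    apply mul_nonneg _ (by positivity)
    apply div_nonneg _ (by positivity)
    exact (Real.Gamma_pos_of_pos (by positivity)).le
  -- final constant comparison
  have hπ3 : (3:ℝ) ≤ π := Real.pi_gt_three.le
  have h33 : Real.sqrt 3 * Real.sqrt 3 = 3 := Real.mul_self_sqrt (by norm_num)
  have h3π : Real.sqrt 3 ≤ Real.sqrt π := Real.sqrt_le_sqrt hπ3
  have hsqge : (3:ℝ) ≤ Real.sqrt 3 * Real.sqrt π := by nlinarith
  have hkey6 : 6 * Real.sqrt π ≤ 2 * π * Real.sqrt 3 := by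
    nlinarith [Real.sq_sqrt hπ.le, Real.sqrt_nonneg π]
  have hREV := REVEN m
  have hcon : ((m+2).factorial : ℝ) / 2^(m+1) * (2^(m+1) / (π * PE (m+1)))
        * ((2*Real.sqrt 3)⁻¹ * (Pa (m+1) 1 + 3 * Pa m 1))
      ≤ 2 * ((m:ℝ)+2)^(m+1) / Real.sqrt π := by
    have eL : ((m+2).factorial : ℝ) / 2^(m+1) * (2^(m+1) / (π * PE (m+1)))
          * ((2*Real.sqrt 3)⁻¹ * (Pa (m+1) 1 + 3 * Pa m 1))
        = (((m+2).factorial : ℝ) * (Pa (m+1) 1 + 3 * Pa m 1))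
          / (π * PE (m+1) * (2*Real.sqrt 3)) := by
      field_simp
    rw [eL, div_le_div_iff₀ (by positivity) hsπ]
    calc (((m+2).factorial : ℝ) * (Pa (m+1) 1 + 3 * Pa m 1)) * Real.sqrt π
        ≤ (12 * ((m:ℝ)+2)^(m+1) * PE (m+1)) * Real.sqrt π :=
          mul_le_mul_of_nonneg_right hREV (by positivity)
      _ = (6 * Real.sqrt π) * (2 * ((m:ℝ)+2)^(m+1) * PE (m+1)) := by ring
      _ ≤ (2 * π * Real.sqrt 3) * (2 * ((m:ℝ)+2)^(m+1) * PE (m+1)) := by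
          apply mul_le_mul_of_nonneg_right hkey6 (by positivity)
      _ = 2 * ((m:ℝ)+2)^(m+1) * (π * PE (m+1) * (2*Real.sqrt 3)) := by ring
  -- chain everything
  calc Real.Gamma ((β+1)+((m:ℝ)+1)) / (Real.Gamma (β+1) * (2*β)^(m+1))
        * (2^(m+1) / (π * PE (m+1)))
        * ∫ s in Set.Icc (-(2*β)) t, (Real.sqrt (t-s)+A)^(2*m+1) * (1+s/(2*β))^β
      ≤ Real.Gamma ((β+1)+((m:ℝ)+1)) / (Real.Gamma (β+1) * (2*β)^(m+1))
        * (2^(m+1) / (π * PE (m+1)))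
        * ((A+1)^(2*m+1) * ((2*Real.sqrt 3)⁻¹
            * (Real.exp (t/2) * (Pa (m+1) 1 + 3 * Pa m 1)))) :=
        mul_le_mul_of_nonneg_left hJ hR0
    _ < ((m+2).factorial : ℝ) / 2^(m+1) * (2^(m+1) / (π * PE (m+1)))
        * ((A+1)^(2*m+1) * ((2*Real.sqrt 3)⁻¹
            * (Real.exp (t/2) * (Pa (m+1) 1 + 3 * Pa m 1)))) := by
        apply mul_lt_mul_of_pos_right _ hJb_pos
        exact mul_lt_mul_of_pos_right hR (by positivity)
    _ ≤ 2 * ((m:ℝ)+2)^(m+1) / Real.sqrt π * (A+1)^(2*m+1) * Real.exp (t/2) := by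
        have h := mul_le_mul_of_nonneg_right hcon
          (show (0:ℝ) ≤ (A+1)^(2*m+1)*Real.exp (t/2) by positivity)
        calc ((m+2).factorial : ℝ) / 2^(m+1) * (2^(m+1) / (π * PE (m+1)))
              * ((A+1)^(2*m+1) * ((2*Real.sqrt 3)⁻¹
                  * (Real.exp (t/2) * (Pa (m+1) 1 + 3 * Pa m 1))))
            = (((m+2).factorial : ℝ) / 2^(m+1) * (2^(m+1) / (π * PE (m+1)))
                * ((2*Real.sqrt 3)⁻¹ * (Pa (m+1) 1 + 3 * Pa m 1)))
              * ((A+1)^(2*m+1) * Real.exp (t/2)) := by ring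
          _ ≤ (2 * ((m:ℝ)+2)^(m+1) / Real.sqrt π) * ((A+1)^(2*m+1) * Real.exp (t/2)) := h
          _ = 2 * ((m:ℝ)+2)^(m+1) / Real.sqrt π * (A+1)^(2*m+1) * Real.exp (t/2) := by
              ring

/-- For `d ≥ 2`, `β > 1`, `A > 0` and `t ∈ ℝ`,
`(c_{d,β} π^{(d-1)/2}/((2β)^{d/2} Γ((d+1)/2))) ∫_{-2β}^{t} (√(t-s)+A)^{d-1}(1+s/(2β))^β ds
 < (2(d/2+1)^{d/2}/√π)(A+1)^{d-1} e^{t/2}`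
(the integral being `0` when `t ≤ -2β`). -/
theorem stmt_8 (d : ℕ) (hd : 2 ≤ d) (β A t : ℝ) (hβ : 1 < β) (hA : 0 < A) :
    cBeta d β * Real.pi ^ (((d : ℝ) - 1) / 2) /
        ((2 * β) ^ ((d : ℝ) / 2) * Real.Gamma (((d : ℝ) + 1) / 2)) *
        ∫ s in Set.Icc (-(2 * β)) t,
          (Real.sqrt (t - s) + A) ^ (d - 1) * (1 + s / (2 * β)) ^ β
      < 2 * ((d : ℝ) / 2 + 1) ^ ((d : ℝ) / 2) / Real.sqrt Real.pi *
          (A + 1) ^ (d - 1) * Real.exp (t / 2) := by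
  rcases Nat.even_or_odd d with he | ho
  · obtain ⟨k, hk⟩ := he
    obtain ⟨m, rfl⟩ : ∃ m, k = m+1 := ⟨k-1, by omega⟩
    have hd2 : d = 2*m+2 := by omega
    subst hd2
    exact even_main m β A t hβ hA
  · obtain ⟨k, hk⟩ := ho
    have hk1 : 1 ≤ k := by omega
    subst hk
    exact odd_main k hk1 β A t hβ hA
end

section
/- Let d ≥ 2 be an integer, A > 0 and t ∈ ℝ. Then (1/(2^{d/2} √π Γ((d+1)/2))) · ∫_{−∞}^{t} (√(t−s) + A)^{d−1} e^{s/2} ds < (2/√π) · (A+1)^{d−1} e^{t/2}. -/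
open MeasureTheory
open Real Set


lemma gamma_step {x : ℝ} (hx : 0 ≤ x) :
    Real.Gamma (x + 1) ≤ Real.sqrt 2 * Real.Gamma (x + 3 / 2) := by
  have hs : (0:ℝ) < x + 1/2 := by linarith
  have ht : (0:ℝ) < x + 3/2 := by linarith
  have hGs : 0 < Real.Gamma (x + 1/2) := Real.Gamma_pos_of_pos hs
  have hGt : 0 < Real.Gamma (x + 3/2) := Real.Gamma_pos_of_pos ht
  have h1 := Real.Gamma_mul_add_mul_le_rpow_Gamma_mul_rpow_Gamma
    (s := x + 1/2) (t := x + 3/2) (a := 1/2) (b := 1/2) hs ht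
    (by norm_num) (by norm_num) (by norm_num)
  have harg : (1/2 : ℝ) * (x + 1/2) + (1/2) * (x + 3/2) = x + 1 := by ring
  rw [harg] at h1
  have h2 : Real.Gamma (x + 1/2) ≤ 2 * Real.Gamma (x + 3/2) := by
    have h3 : Real.Gamma (x + 3/2) = (x + 1/2) * Real.Gamma (x + 1/2) := by
      have := Real.Gamma_add_one (ne_of_gt hs)
      rw [show x + 1/2 + 1 = x + 3/2 by ring] at this
      exact this
    nlinarith
  have h4 : Real.Gamma (x + 1/2) ^ ((1:ℝ)/2) ≤ (2 * Real.Gamma (x + 3/2)) ^ ((1:ℝ)/2) :=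
    Real.rpow_le_rpow hGs.le h2 (by norm_num)
  have h5 : (2 * Real.Gamma (x + 3/2)) ^ ((1:ℝ)/2)
      = Real.sqrt 2 * Real.Gamma (x + 3/2) ^ ((1:ℝ)/2) := by
    rw [Real.mul_rpow (by norm_num) hGt.le, Real.sqrt_eq_rpow]
  calc Real.Gamma (x + 1)
      ≤ Real.Gamma (x + 1/2) ^ ((1:ℝ)/2) * Real.Gamma (x + 3/2) ^ ((1:ℝ)/2) := h1
    _ ≤ Real.sqrt 2 * Real.Gamma (x + 3/2) ^ ((1:ℝ)/2) * Real.Gamma (x + 3/2) ^ ((1:ℝ)/2) := by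
        apply mul_le_mul_of_nonneg_right (h4.trans_eq h5)
        positivity
    _ = Real.sqrt 2 * Real.Gamma (x + 3/2) := by
        rw [mul_assoc, ← Real.rpow_add hGt]
        norm_num

lemma gmono : Monotone (fun n : ℕ => (2:ℝ) ^ ((n:ℝ)/2) * Real.Gamma ((n:ℝ)/2 + 1)) := by
  apply monotone_nat_of_le_succ
  intro n
  simp only [Nat.cast_succ]
  have h1 : (2:ℝ) ^ (((n:ℝ)+1)/2) = (2:ℝ) ^ ((n:ℝ)/2) * Real.sqrt 2 := by
    rw [Real.sqrt_eq_rpow, ← Real.rpow_add (by norm_num)]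
    ring_nf
  rw [h1, show ((n:ℝ)+1)/2 + 1 = (n:ℝ)/2 + 3/2 by ring, mul_assoc]
  apply mul_le_mul_of_nonneg_left _ (by positivity)
  exact gamma_step (by positivity)

lemma Jint (k : ℕ) : IntegrableOn (fun u : ℝ => u ^ ((k:ℝ)/2) * Real.exp (-(u/2))) (Ioi 0) := by
  have h := integrableOn_rpow_mul_exp_neg_mul_rpow (p := 1) (s := (k:ℝ)/2) (b := 1/2)
    (by linarith [show (0:ℝ) ≤ (k:ℝ)/2 by positivity]) one_pos (by norm_num)
  refine h.congr_fun (fun x hx => ?_) measurableSet_Ioi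
  simp only [Real.rpow_one]
  ring_nf

lemma Jval (k : ℕ) : ∫ u in Ioi (0:ℝ), u ^ ((k:ℝ)/2) * Real.exp (-(u/2))
    = 2 ^ ((k:ℝ)/2 + 1) * Real.Gamma ((k:ℝ)/2 + 1) := by
  have h := integral_rpow_mul_exp_neg_mul_rpow (p := 1) (q := (k:ℝ)/2) (b := 1/2)
    one_pos (by linarith [show (0:ℝ) ≤ (k:ℝ)/2 by positivity]) (by norm_num)
  simp only [Real.rpow_one] at h
  rw [show ∫ u in Ioi (0:ℝ), u ^ ((k:ℝ)/2) * Real.exp (-(u/2))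
      = ∫ u in Ioi (0:ℝ), u ^ ((k:ℝ)/2) * Real.exp (-(1/2) * u) by
    congr 1; ext u; ring_nf]
  rw [h]
  have : ((1:ℝ)/2) ^ (-(((k:ℝ)/2) + 1) / 1) = 2 ^ ((k:ℝ)/2 + 1) := by
    rw [div_one, one_div, Real.inv_rpow (by norm_num), ← Real.rpow_neg (by norm_num), neg_neg]
  rw [this, div_one]
  ring

lemma cov (f : ℝ → ℝ) (t : ℝ) :
    ∫ s in Iic t, f s = ∫ u in Ioi (0:ℝ), f (t - u) := by
  have hemb : MeasurableEmbedding (fun u : ℝ => t - u) := by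
    have := ((Homeomorph.neg ℝ).trans (Homeomorph.addLeft t)).isClosedEmbedding.measurableEmbedding
    convert this using 1; ext u; simp [Homeomorph.trans_apply, sub_eq_add_neg]
  have hmap : Measure.map (fun u : ℝ => t - u) volume = volume := by
    have : (fun u : ℝ => t - u) = (fun x : ℝ => t + x) ∘ (fun u : ℝ => -u) := by
      ext u; simp [sub_eq_add_neg]
    rw [this, ← Measure.map_map (by fun_prop) (by fun_prop),
      Measure.map_neg_eq_self, MeasureTheory.map_add_left_eq_self volume t]
  have h := hemb.setIntegral_map (μ := volume) f (Iic t)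
  rw [hmap] at h
  rw [h]
  have hpre : (fun u : ℝ => t - u) ⁻¹' Iic t = Ici 0 := by
    ext u; simp [sub_le_iff_le_add]
  rw [hpre, integral_Ici_eq_integral_Ioi]

/-- For `d ≥ 2`, `A > 0` and `t ∈ ℝ`,
`(1/(2^{d/2} √π Γ((d+1)/2))) ∫_{-∞}^{t} (√(t-s)+A)^{d-1} e^{s/2} ds
 < (2/√π)(A+1)^{d-1} e^{t/2}`. -/
theorem stmt_9 (d : ℕ) (hd : 2 ≤ d) (A t : ℝ) (hA : 0 < A) :
    1 / ((2 : ℝ) ^ ((d : ℝ) / 2) * Real.sqrt Real.pi * Real.Gamma (((d : ℝ) + 1) / 2)) *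
        ∫ s in Set.Iic t, (Real.sqrt (t - s) + A) ^ (d - 1) * Real.exp (s / 2)
      < 2 / Real.sqrt Real.pi * (A + 1) ^ (d - 1) * Real.exp (t / 2) := by
  obtain ⟨m, rfl⟩ : ∃ m, d = m + 1 := ⟨d - 1, by omega⟩
  simp only [Nat.add_sub_cancel]
  push_cast
  set c : ℝ := 2 ^ (((m:ℝ) + 1) / 2) * Real.sqrt Real.pi * Real.Gamma (((m:ℝ) + 1 + 1) / 2)
    with hc_def
  have hπ : 0 < Real.sqrt Real.pi := Real.sqrt_pos.mpr Real.pi_pos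
  have hΓd : 0 < Real.Gamma (((m:ℝ) + 1 + 1) / 2) := Real.Gamma_pos_of_pos (by positivity)
  have hc : 0 < c := by positivity
  have hE : 0 < Real.exp (t / 2) := Real.exp_pos _
  -- step 1: evaluate the integral
  have hpt : ∀ u ∈ Ioi (0:ℝ), (Real.sqrt u + A) ^ m * Real.exp ((t - u) / 2)
      = ∑ k ∈ Finset.range (m + 1),
        ((m.choose k : ℝ) * A ^ (m - k) * Real.exp (t / 2))
          * (u ^ ((k:ℝ)/2) * Real.exp (-(u/2))) := by
    intro u hu
    have hu0 : (0:ℝ) < u := hu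
    rw [add_pow, Finset.sum_mul]
    refine Finset.sum_congr rfl (fun k _ => ?_)
    have hsq : Real.sqrt u ^ k = u ^ ((k:ℝ)/2) := by
      rw [Real.sqrt_eq_rpow, ← Real.rpow_natCast (u ^ ((1:ℝ)/2)) k, ← Real.rpow_mul hu0.le,
        show (1:ℝ)/2 * (k:ℕ) = (k:ℝ)/2 by ring]
    have hexp : Real.exp ((t - u)/2) = Real.exp (t/2) * Real.exp (-(u/2)) := by
      rw [← Real.exp_add]; ring_nf
    rw [hsq, hexp]; ring
  have hI : (∫ s in Set.Iic t, (Real.sqrt (t - s) + A) ^ m * Real.exp (s / 2))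
      = ∑ k ∈ Finset.range (m + 1),
        ((m.choose k : ℝ) * A ^ (m - k) * Real.exp (t / 2))
          * (2 ^ ((k:ℝ)/2 + 1) * Real.Gamma ((k:ℝ)/2 + 1)) := by
    rw [cov (fun s => (Real.sqrt (t - s) + A) ^ m * Real.exp (s / 2)) t]
    simp only [sub_sub_cancel]
    rw [setIntegral_congr_fun measurableSet_Ioi hpt,
      integral_finset_sum _ (fun k _ => ((Jint k).const_mul _))]
    exact Finset.sum_congr rfl fun k _ => by rw [MeasureTheory.integral_const_mul, Jval]
  rw [hI, Finset.mul_sum]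
  have hbin : (A + 1) ^ m = ∑ k ∈ Finset.range (m + 1), (m.choose k : ℝ) * A ^ (m - k) := by
    rw [add_comm, add_pow]
    exact Finset.sum_congr rfl fun k _ => by rw [one_pow, one_mul, mul_comm]
  have hrhs : 2 / Real.sqrt Real.pi * (A + 1) ^ m * Real.exp (t / 2)
      = ∑ k ∈ Finset.range (m + 1),
        (2 / Real.sqrt Real.pi * Real.exp (t / 2)) * ((m.choose k : ℝ) * A ^ (m - k)) := by
    rw [← Finset.mul_sum, ← hbin]; ring
  rw [hrhs]
  refine Finset.sum_lt_sum_of_nonempty Finset.nonempty_range_add_one (fun k hk => ?_)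
  have hkm : k ≤ m := Finset.mem_range_succ_iff.mp hk
  have hGk : (0:ℝ) < (m.choose k : ℝ) * A ^ (m - k) := by
    have := Nat.choose_pos hkm
    positivity
  -- key strict inequality
  have hsqrt2 : (1:ℝ) < Real.sqrt 2 := by
    nlinarith [Real.sq_sqrt (show (0:ℝ) ≤ 2 by norm_num), Real.sqrt_nonneg 2]
  have hgm : 0 < (2:ℝ) ^ ((m:ℝ)/2) * Real.Gamma ((m:ℝ)/2 + 1) :=
    mul_pos (Real.rpow_pos_of_pos two_pos _) (Real.Gamma_pos_of_pos (by positivity))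
  have hw : (2:ℝ) ^ ((k:ℝ)/2 + 1) * Real.Gamma ((k:ℝ)/2 + 1)
      < 2 * (2:ℝ) ^ (((m:ℝ) + 1) / 2) * Real.Gamma (((m:ℝ) + 1 + 1) / 2) := by
    have hg := gmono hkm
    simp only at hg
    have h1 : (2:ℝ) ^ (((m:ℝ)+1)/2) = (2:ℝ) ^ ((m:ℝ)/2) * Real.sqrt 2 := by
      rw [Real.sqrt_eq_rpow, ← Real.rpow_add (by norm_num)]
      ring_nf
    have h2 : ((m:ℝ) + 1 + 1) / 2 = (m:ℝ)/2 + 1 := by ring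
    rw [h1, h2]
    calc (2:ℝ) ^ ((k:ℝ)/2 + 1) * Real.Gamma ((k:ℝ)/2 + 1)
        = 2 * ((2:ℝ) ^ ((k:ℝ)/2) * Real.Gamma ((k:ℝ)/2 + 1)) := by
          rw [Real.rpow_add_one (by norm_num : (2:ℝ) ≠ 0)]; ring
      _ ≤ 2 * ((2:ℝ) ^ ((m:ℝ)/2) * Real.Gamma ((m:ℝ)/2 + 1)) := by
          exact mul_le_mul_of_nonneg_left hg (by norm_num)
      _ < 2 * ((2:ℝ) ^ ((m:ℝ)/2) * Real.sqrt 2) * Real.Gamma ((m:ℝ)/2 + 1) := by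
          nlinarith
  -- conclude termwise
  have hp2 : (0:ℝ) < 2 ^ (((m:ℝ) + 1) / 2) := Real.rpow_pos_of_pos two_pos _
  have heq1 : 1 / c * ((m.choose k : ℝ) * A ^ (m - k) * Real.exp (t / 2)
        * (2 ^ ((k:ℝ)/2 + 1) * Real.Gamma ((k:ℝ)/2 + 1)))
      = ((m.choose k : ℝ) * A ^ (m - k) * Real.exp (t / 2))
        * ((2 ^ ((k:ℝ)/2 + 1) * Real.Gamma ((k:ℝ)/2 + 1)) / c) := by ring
  have heq2 : 2 / Real.sqrt Real.pi * Real.exp (t / 2) * ((m.choose k : ℝ) * A ^ (m - k))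
      = ((m.choose k : ℝ) * A ^ (m - k) * Real.exp (t / 2))
        * ((2 * (2:ℝ) ^ (((m:ℝ) + 1) / 2) * Real.Gamma (((m:ℝ) + 1 + 1) / 2)) / c) := by
    rw [hc_def]
    field_simp
  rw [heq1, heq2]
  exact mul_lt_mul_of_pos_left ((div_lt_div_iff_of_pos_right hc).mpr hw) (mul_pos hGk hE)
end

section
/- Let i ≥ 0 be an integer and let β, t be real numbers with β > 1 + i/2 and t < 2β. Then ∫_{−∞}^{t} (t−s)^{i/2} (1 − s/(2β))^{−β} ds = 2^{i/2+1} Γ(i/2+1) · (β^{β} Γ(β−1−i/2)/Γ(β)) · (β − t/2)^{−β+1+i/2}; in particular the integral is finite. -/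
open MeasureTheory Set


/-- Real Beta integral on `Ioo 0 1`. -/
lemma realBeta (a b : ℝ) (ha : 0 < a) (hb : 0 < b) :
    IntegrableOn (fun x => x ^ (a - 1) * (1 - x) ^ (b - 1)) (Ioo (0:ℝ) 1) ∧
    ∫ x in Ioo (0:ℝ) 1, x ^ (a - 1) * (1 - x) ^ (b - 1)
      = Real.Gamma a * Real.Gamma b / Real.Gamma (a + b) := by
  have hEq : ∀ x ∈ Icc (0:ℝ) 1,
      ((x : ℂ) ^ ((a:ℂ) - 1) * ((1:ℂ) - x) ^ ((b:ℂ) - 1))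
        = ((x ^ (a - 1) * (1 - x) ^ (b - 1) : ℝ) : ℂ) := by
    intro x hx
    rw [Complex.ofReal_mul, Complex.ofReal_cpow hx.1, Complex.ofReal_cpow (by linarith [hx.2])]
    push_cast
    ring_nf
  have hconv := Complex.betaIntegral_convergent (u := (a:ℂ)) (v := (b:ℂ))
    (by simpa using ha) (by simpa using hb)
  have hconv' : IntegrableOn
      (fun x : ℝ => (x : ℂ) ^ ((a:ℂ) - 1) * ((1:ℂ) - x) ^ ((b:ℂ) - 1)) (Ioo (0:ℝ) 1) := by
    have := (intervalIntegrable_iff_integrableOn_Ioo_of_le (by norm_num : (0:ℝ) ≤ 1)).mp hconv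
    exact this
  have hint : IntegrableOn (fun x => x ^ (a - 1) * (1 - x) ^ (b - 1)) (Ioo (0:ℝ) 1) := by
    have h1 : IntegrableOn
        (fun x : ℝ => ((x ^ (a - 1) * (1 - x) ^ (b - 1) : ℝ) : ℂ)) (Ioo (0:ℝ) 1) := by
      refine hconv'.congr_fun (fun x hx => (hEq x ⟨hx.1.le, hx.2.le⟩)) measurableSet_Ioo
    have := h1.re
    simpa [IntegrableOn] using this
  refine ⟨hint, ?_⟩
  have hG := Complex.Gamma_mul_Gamma_eq_betaIntegral
    (s := (a:ℂ)) (t := (b:ℂ)) (by simpa using ha) (by simpa using hb)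
  have hbeta : Complex.betaIntegral (a:ℂ) (b:ℂ)
      = ((∫ x in Ioo (0:ℝ) 1, x ^ (a - 1) * (1 - x) ^ (b - 1) : ℝ) : ℂ) := by
    rw [Complex.betaIntegral]
    rw [intervalIntegral.integral_congr (g := fun x : ℝ =>
        ((x ^ (a - 1) * (1 - x) ^ (b - 1) : ℝ) : ℂ))
      (fun x hx => hEq x (by rwa [Set.uIcc_of_le (by norm_num : (0:ℝ) ≤ 1)] at hx))]
    rw [intervalIntegral.integral_ofReal]
    norm_cast
    rw [intervalIntegral.integral_of_le (by norm_num : (0:ℝ) ≤ 1),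
      integral_Ioc_eq_integral_Ioo]
  rw [hbeta] at hG
  have hGa : Complex.Gamma (a:ℂ) = (Real.Gamma a : ℂ) := Complex.Gamma_ofReal a
  have hGb : Complex.Gamma (b:ℂ) = (Real.Gamma b : ℂ) := Complex.Gamma_ofReal b
  have hGab : Complex.Gamma ((a:ℂ) + b) = (Real.Gamma (a + b) : ℂ) := by
    rw [← Complex.ofReal_add]; exact Complex.Gamma_ofReal _
  rw [hGa, hGb, hGab] at hG
  have hreal : Real.Gamma a * Real.Gamma b
      = Real.Gamma (a + b) * ∫ x in Ioo (0:ℝ) 1, x ^ (a - 1) * (1 - x) ^ (b - 1) := by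
    exact_mod_cast hG
  have hne : Real.Gamma (a + b) ≠ 0 := (Real.Gamma_pos_of_pos (by linarith)).ne'
  field_simp [hreal]
  rw [hreal]; ring


lemma auxB (p b : ℝ) (hp : -1 < p) (hb : p + 1 < b) :
    IntegrableOn (fun v => v ^ p * (1 + v) ^ (-b)) (Ioi (0:ℝ)) ∧
    ∫ v in Ioi (0:ℝ), v ^ p * (1 + v) ^ (-b)
      = Real.Gamma (p + 1) * Real.Gamma (b - p - 1) / Real.Gamma b := by
  set f : ℝ → ℝ := fun x => x / (1 - x) with hf
  set f' : ℝ → ℝ := fun x => ((1 - x) ^ 2)⁻¹ with hf'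
  have hderiv : ∀ x ∈ Ioo (0:ℝ) 1, HasDerivWithinAt f (f' x) (Ioo 0 1) x := by
    intro x hx
    have hne : 1 - x ≠ 0 := by have := hx.2; intro h; linarith [sub_eq_zero.mp h]
    have : HasDerivAt f ((1 * (1 - x) - x * (-1)) / (1 - x) ^ 2) x := by
      exact (hasDerivAt_id x).div ((hasDerivAt_id x).const_sub 1) hne
    have h2 : (1 * (1 - x) - x * (-1)) / (1 - x) ^ 2 = f' x := by
      simp only [hf']; rw [div_eq_mul_inv]; ring
    rw [h2] at this
    exact this.hasDerivWithinAt
  have hinj : InjOn f (Ioo (0:ℝ) 1) := by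
    intro x hx y hy h
    have hnx : (1:ℝ) - x ≠ 0 := by have := hx.2; intro h'; linarith [sub_eq_zero.mp h']
    have hny : (1:ℝ) - y ≠ 0 := by have := hy.2; intro h'; linarith [sub_eq_zero.mp h']
    simp only [hf] at h; rw [div_eq_div_iff hnx hny] at h
    nlinarith [h]
  have himg : f '' Ioo (0:ℝ) 1 = Ioi (0:ℝ) := by
    ext u
    constructor
    · rintro ⟨x, hx, rfl⟩
      exact div_pos hx.1 (by linarith [hx.2])
    · intro hu
      refine ⟨u / (1 + u), ⟨div_pos hu (by linarith [mem_Ioi.mp hu]), ?_⟩, ?_⟩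
      · rw [div_lt_one (by linarith [mem_Ioi.mp hu])]; linarith [mem_Ioi.mp hu]
      · have h1u : (1:ℝ) + u ≠ 0 := by have := mem_Ioi.mp hu; positivity
        have h0 : (0:ℝ) < 1 + u := by have := mem_Ioi.mp hu; linarith
        simp only [hf]
        have h1 : 1 - u / (1 + u) = 1 / (1 + u) := by field_simp; ring
        rw [h1]
        field_simp
  set g : ℝ → ℝ := fun v => v ^ p * (1 + v) ^ (-b) with hg
  have hEq : ∀ x ∈ Ioo (0:ℝ) 1, |f' x| • g (f x) = x ^ p * (1 - x) ^ (b - p - 2) := by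
    intro x hx
    have hx0 : 0 < x := hx.1
    have hx1 : 0 < 1 - x := by linarith [hx.2]
    have h1f : 1 + f x = (1 - x)⁻¹ := by
      show 1 + x / (1 - x) = (1 - x)⁻¹; field_simp; ring
    have hfx : f x = x * (1 - x)⁻¹ := div_eq_mul_inv _ _
    simp only [smul_eq_mul, hg, hf']
    rw [h1f, hfx]
    rw [abs_of_pos (by positivity : (0:ℝ) < ((1 - x) ^ 2)⁻¹)]
    have e1 : ((1 - x) ^ 2)⁻¹ = (1 - x) ^ (-2 : ℝ) := by
      rw [← Real.rpow_natCast (1 - x) 2, ← Real.rpow_neg hx1.le]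
      norm_num
    have e2 : (x * (1 - x)⁻¹) ^ p = x ^ p * (1 - x) ^ (-p) := by
      rw [Real.mul_rpow hx0.le (by positivity), Real.inv_rpow hx1.le,
        ← Real.rpow_neg hx1.le]
    have e3 : ((1 - x)⁻¹) ^ (-b) = (1 - x) ^ b := by
      rw [Real.inv_rpow hx1.le, ← Real.rpow_neg hx1.le, neg_neg]
    rw [e1, e2, e3,
      show (1 - x) ^ (-2:ℝ) * (x ^ p * (1 - x) ^ (-p) * (1 - x) ^ b)
        = x ^ p * ((1 - x) ^ (-2:ℝ) * ((1 - x) ^ (-p) * (1 - x) ^ b)) by ring,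
      ← Real.rpow_add hx1, ← Real.rpow_add hx1]
    congr 1
    ring
  obtain ⟨hBint, hBval⟩ := realBeta (p + 1) (b - p - 1) (by linarith) (by linarith)
  have hBint' : IntegrableOn (fun x => x ^ p * (1 - x) ^ (b - p - 2)) (Ioo (0:ℝ) 1) := by
    have : (fun x : ℝ => x ^ (p + 1 - 1) * (1 - x) ^ (b - p - 1 - 1))
        = fun x => x ^ p * (1 - x) ^ (b - p - 2) := by
      funext x; ring_nf
    rwa [this] at hBint
  constructor
  · rw [← himg, integrableOn_image_iff_integrableOn_abs_deriv_smul measurableSet_Ioo hderiv hinj]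
    exact hBint'.congr_fun (fun x hx => (hEq x hx).symm) measurableSet_Ioo
  · rw [← himg, integral_image_eq_integral_abs_deriv_smul measurableSet_Ioo hderiv hinj]
    rw [setIntegral_congr_fun measurableSet_Ioo hEq]
    have : ∫ x in Ioo (0:ℝ) 1, x ^ p * (1 - x) ^ (b - p - 2)
        = ∫ x in Ioo (0:ℝ) 1, x ^ (p + 1 - 1) * (1 - x) ^ (b - p - 1 - 1) := by
      congr 1; funext x; ring_nf
    rw [this, hBval]
    congr 2
    ring

open MeasureTheory

/-- For integer `i ≥ 0` and reals `β > 1 + i/2`, `t < 2β`,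
`∫_{-∞}^{t} (t-s)^{i/2} (1-s/(2β))^{-β} ds
 = 2^{i/2+1} Γ(i/2+1) (β^β Γ(β-1-i/2)/Γ(β)) (β-t/2)^{-β+1+i/2}`,
and in particular the integral is finite. -/
theorem stmt_10 (i : ℕ) (β t : ℝ) (hβ : 1 + (i : ℝ) / 2 < β) (ht : t < 2 * β) :
    IntegrableOn (fun s => (t - s) ^ ((i : ℝ) / 2) * (1 - s / (2 * β)) ^ (-β))
      (Set.Iic t) ∧
    ∫ s in Set.Iic t, (t - s) ^ ((i : ℝ) / 2) * (1 - s / (2 * β)) ^ (-β)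
      = (2 : ℝ) ^ ((i : ℝ) / 2 + 1) * Real.Gamma ((i : ℝ) / 2 + 1) *
          (β ^ β * Real.Gamma (β - 1 - (i : ℝ) / 2) / Real.Gamma β) *
          (β - t / 2) ^ (-β + 1 + (i : ℝ) / 2) := by
  set p : ℝ := (i : ℝ) / 2 with hpdef
  have hp0 : 0 ≤ p := by positivity
  have hp : -1 < p := by linarith
  have hbp : p + 1 < β := by linarith
  have hβ0 : 0 < β := by linarith
  set c : ℝ := 2 * β - t with hcdef
  have hc : 0 < c := by simp only [hcdef]; linarith
  set g0 : ℝ → ℝ := fun s => (t - s) ^ p * (1 - s / (2 * β)) ^ (-β) with hg0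
  set ψ : ℝ → ℝ := fun u => t - c * u with hψ
  have hderiv : ∀ u ∈ Set.Ioi (0:ℝ), HasDerivWithinAt ψ (-c) (Set.Ioi 0) u := by
    intro u _
    have h1 : HasDerivAt ψ (-(c * 1)) u := ((hasDerivAt_id u).const_mul c).const_sub t
    simpa using h1.hasDerivWithinAt
  have hinj : Set.InjOn ψ (Set.Ioi (0:ℝ)) := by
    intro x _ y _ h
    simp only [hψ] at h
    have : c * x = c * y := by linarith
    exact mul_left_cancel₀ hc.ne' this
  have himg : ψ '' Set.Ioi (0:ℝ) = Set.Iio t := by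
    ext u
    constructor
    · rintro ⟨x, hx, rfl⟩
      have : 0 < c * x := mul_pos hc hx
      simp only [hψ, Set.mem_Iio]; linarith
    · intro hu
      refine ⟨(t - u) / c, ?_, ?_⟩
      · have h' := Set.mem_Iio.mp hu
        have : 0 < t - u := by linarith
        exact div_pos this hc
      · simp only [hψ]
        field_simp
        ring
  set K : ℝ := c ^ (p + 1) * (c / (2 * β)) ^ (-β) with hK
  have hEq : ∀ u ∈ Set.Ioi (0:ℝ), |(-c)| • g0 (ψ u) = K * (u ^ p * (1 + u) ^ (-β)) := by
    intro u hu
    have hu0 : 0 < u := hu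
    have e0 : t - ψ u = c * u := by simp only [hψ]; ring
    have e1 : 1 - ψ u / (2 * β) = c / (2 * β) * (1 + u) := by
      simp only [hψ]; field_simp; ring
    simp only [smul_eq_mul, hg0, e0, e1]
    rw [abs_neg, abs_of_pos hc]
    rw [Real.mul_rpow hc.le hu0.le,
      Real.mul_rpow (by positivity : (0:ℝ) ≤ c / (2 * β)) (by positivity : (0:ℝ) ≤ 1 + u)]
    rw [hK, Real.rpow_add_one hc.ne' p]
    ring
  obtain ⟨hBint, hBval⟩ := auxB p β hp hbp
  have hintIio : IntegrableOn g0 (Set.Iio t) := by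
    rw [← himg, integrableOn_image_iff_integrableOn_abs_deriv_smul measurableSet_Ioi hderiv hinj]
    have : IntegrableOn (fun u => K * (u ^ p * (1 + u) ^ (-β))) (Set.Ioi (0:ℝ)) :=
      hBint.const_mul K
    exact this.congr_fun (fun u hu => (hEq u hu).symm) measurableSet_Ioi
  have hval : ∫ s in Set.Iio t, g0 s
      = K * (Real.Gamma (p + 1) * Real.Gamma (β - p - 1) / Real.Gamma β) := by
    rw [← himg, integral_image_eq_integral_abs_deriv_smul measurableSet_Ioi hderiv hinj]
    rw [setIntegral_congr_fun measurableSet_Ioi hEq, integral_const_mul, hBval]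
  have hKval : K = 2 ^ (p + 1) * (β ^ β) * (β - t / 2) ^ (-β + 1 + p) := by
    have hb2 : (0:ℝ) < β - t / 2 := by linarith
    have ec : c = 2 * (β - t / 2) := by simp only [hcdef]; ring
    have ec2 : c / (2 * β) = (β - t / 2) / β := by
      rw [ec]; field_simp
    rw [hK, ec2, ec]
    rw [Real.mul_rpow (by norm_num) hb2.le]
    rw [Real.div_rpow hb2.le hβ0.le]
    rw [Real.rpow_neg hβ0.le β, div_inv_eq_mul]
    rw [show 2 ^ (p+1) * (β - t/2) ^ (p+1) * ((β - t/2) ^ (-β) * β ^ β)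
        = 2 ^ (p+1) * β ^ β * ((β - t/2) ^ (p+1) * (β - t/2) ^ (-β)) by ring]
    rw [← Real.rpow_add hb2]
    congr 1
    ring
  have hΓ : β - p - 1 = β - 1 - p := by ring
  constructor
  · exact hintIio.congr_set_ae Iio_ae_eq_Iic.symm
  · rw [show (∫ s in Set.Iic t, (t - s) ^ ((i:ℝ)/2) * (1 - s / (2 * β)) ^ (-β))
        = ∫ s in Set.Iic t, g0 s from rfl]
    rw [setIntegral_congr_set Iio_ae_eq_Iic.symm, hval, hKval, hΓ]
    ring
end

section
/- Let d ≥ 2 be an integer, let β₀ > (d+1)/2 and β ≥ β₀ be real numbers, and let i be an integer with 0 ≤ i ≤ d−1. Then β^{i/2+1} Γ(β−1−i/2)/Γ(β) < (1 − (d+1)/(2β₀))^{−(d+1)/2}. -/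
open Real

-- half-step Gautschi-type bound via log-convexity
lemma lemA (x : ℝ) (hx : 0 < x) :
    Real.Gamma (x + 1) ≤ Real.Gamma (x + 1/2) * Real.sqrt (x + 1/2) := by
  have h1 : (0:ℝ) < x + 1/2 := by linarith
  have h2 : (0:ℝ) < x + 3/2 := by linarith
  have hg1 : 0 < Real.Gamma (x + 1/2) := Real.Gamma_pos_of_pos h1
  have hconv := Real.convexOn_log_Gamma.2 (Set.mem_Ioi.mpr h1) (Set.mem_Ioi.mpr h2)
    (by norm_num : (0:ℝ) ≤ 1/2) (by norm_num : (0:ℝ) ≤ 1/2) (by norm_num)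
  simp only [smul_eq_mul, Function.comp_apply] at hconv
  have hpt : 1/2 * (x + 1/2) + 1/2 * (x + 3/2) = x + 1 := by ring
  rw [hpt] at hconv
  have h32 : Real.Gamma (x + 3/2) = (x + 1/2) * Real.Gamma (x + 1/2) := by
    have := Real.Gamma_add_one (ne_of_gt h1)
    rw [show x + 3/2 = x + 1/2 + 1 by ring, this]
  rw [h32, Real.log_mul (ne_of_gt h1) (ne_of_gt hg1)] at hconv
  have hlog : Real.log (Real.Gamma (x + 1)) ≤
      Real.log (Real.Gamma (x + 1/2) * Real.sqrt (x + 1/2)) := by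
    rw [Real.log_mul (ne_of_gt hg1) (ne_of_gt (Real.sqrt_pos.mpr h1)), Real.log_sqrt h1.le]
    linarith
  have hG1 : 0 < Real.Gamma (x + 1) := Real.Gamma_pos_of_pos (by linarith)
  calc Real.Gamma (x+1) = Real.exp (Real.log (Real.Gamma (x+1))) := (Real.exp_log hG1).symm
    _ ≤ Real.exp (Real.log (Real.Gamma (x + 1/2) * Real.sqrt (x + 1/2))) :=
        Real.exp_le_exp.mpr hlog
    _ = _ := Real.exp_log (by positivity)

-- natural shift lower bound
lemma lemB (m : ℕ) : ∀ x : ℝ, 0 < x → x ^ m * Real.Gamma x ≤ Real.Gamma (x + m) := by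
  induction m with
  | zero => intro x hx; simp
  | succ n ih =>
      intro x hx
      have h1 := ih x hx
      have hg : 0 < Real.Gamma x := Real.Gamma_pos_of_pos hx
      have hrec : Real.Gamma (x + (n+1:ℕ)) = (x + n) * Real.Gamma (x + n) := by
        rw [show (x + (n+1:ℕ) : ℝ) = x + n + 1 by push_cast; ring,
          Real.Gamma_add_one (by positivity)]
      rw [hrec]
      calc x ^ (n+1) * Real.Gamma x = x * (x ^ n * Real.Gamma x) := by ring
        _ ≤ x * Real.Gamma (x + n) := by
            exact mul_le_mul_of_nonneg_left h1 hx.le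
        _ ≤ (x + n) * Real.Gamma (x + n) := by
            have : 0 < Real.Gamma (x + n) := Real.Gamma_pos_of_pos (by positivity)
            nlinarith

lemma key_even (m : ℕ) (hm : 1 ≤ m) (x : ℝ) (hx : 0 < x) :
    x ^ ((m:ℝ)+1) * Real.Gamma x < Real.Gamma (x + ((m:ℝ)+1)) := by
  have hΓx : 0 < Real.Gamma x := Real.Gamma_pos_of_pos hx
  have h1 : x ^ m * Real.Gamma x ≤ Real.Gamma (x + m) := lemB m x hx
  have hxm : (0:ℝ) < x + m := by positivity
  have hrec : Real.Gamma (x + ((m:ℝ)+1)) = (x + m) * Real.Gamma (x + m) := by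
    rw [show x + ((m:ℝ)+1) = (x + m) + 1 by ring, Real.Gamma_add_one hxm.ne']
  have hrpow : x ^ ((m:ℝ)+1) = x ^ (m+1 : ℕ) := by
    rw [← Real.rpow_natCast x (m+1)]; push_cast; ring_nf
  rw [hrec, hrpow]
  have hΓxm : 0 < Real.Gamma (x+m) := Real.Gamma_pos_of_pos hxm
  have hm' : (1:ℝ) ≤ m := by exact_mod_cast hm
  calc x ^ (m+1) * Real.Gamma x = x * (x^m * Real.Gamma x) := by ring
    _ ≤ x * Real.Gamma (x+m) := mul_le_mul_of_nonneg_left h1 hx.le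
    _ < (x+m) * Real.Gamma (x+m) := by nlinarith


lemma e1aux (m : ℕ) (y a : ℝ) (hy : 0 < y) :
    y ^ (m+1) * (a / Real.sqrt y) = (y^m * Real.sqrt y) * a := by
  have hs : Real.sqrt y ≠ 0 := ne_of_gt (Real.sqrt_pos.mpr hy)
  have hsq : Real.sqrt y * Real.sqrt y = y := Real.mul_self_sqrt hy.le
  rw [div_eq_mul_inv]
  field_simp
  rw [Real.sq_sqrt hy.le]; ring

lemma key_odd (m : ℕ) (x : ℝ) (hx : 0 < x) :
    x ^ ((m:ℝ)+3/2) * Real.Gamma x < Real.Gamma (x + ((m:ℝ)+3/2)) := by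
  set y := x + 1/2 with hy'
  have hy : 0 < y := by rw [hy']; linarith
  have hΓx : 0 < Real.Gamma x := Real.Gamma_pos_of_pos hx
  have hΓy : 0 < Real.Gamma y := Real.Gamma_pos_of_pos hy
  have hsy : 0 < Real.sqrt y := Real.sqrt_pos.mpr hy
  have hxg : x * Real.Gamma x ≤ Real.Gamma y * Real.sqrt y := by
    rw [← Real.Gamma_add_one hx.ne']; exact lemA x hx
  have e1 : y ^ (m+1) * (x * Real.Gamma x / Real.sqrt y)
      = (y^m * Real.sqrt y) * (x * Real.Gamma x) := e1aux m y (x * Real.Gamma x) hy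
  have e2 : x ^ ((m:ℝ)+3/2) = x^m * Real.sqrt x * x := by
    have h : x ^ ((m:ℝ)+3/2) = x ^ (m:ℝ) * (x ^ (1:ℝ) * x ^ (1/2:ℝ)) := by
      rw [← Real.rpow_add hx, ← Real.rpow_add hx]; norm_num
    rw [h, Real.rpow_one, Real.rpow_natCast, ← Real.sqrt_eq_rpow]; ring
  have hxy : x < y := by rw [hy']; linarith
  have h5 : x^m * Real.sqrt x < y^m * Real.sqrt y := by
    calc x^m * Real.sqrt x < x^m * Real.sqrt y :=
          mul_lt_mul_of_pos_left (Real.sqrt_lt_sqrt hx.le hxy) (pow_pos hx m)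
      _ ≤ y^m * Real.sqrt y :=
          mul_le_mul_of_nonneg_right (pow_le_pow_left₀ hx.le hxy.le m) (Real.sqrt_nonneg y)
  have hpt : y + ((m+1:ℕ):ℝ) = x + ((m:ℝ)+3/2) := by rw [hy']; push_cast; ring
  calc x ^ ((m:ℝ)+3/2) * Real.Gamma x = (x^m * Real.sqrt x) * (x * Real.Gamma x) := by
        rw [e2]; ring
    _ < (y^m * Real.sqrt y) * (x * Real.Gamma x) :=
        mul_lt_mul_of_pos_right h5 (by positivity)
    _ = y ^ (m+1) * (x * Real.Gamma x / Real.sqrt y) := e1.symm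
    _ ≤ y ^ (m+1) * Real.Gamma y := by
        refine mul_le_mul_of_nonneg_left ?_ (by positivity)
        rw [div_le_iff₀ hsy]; exact hxg
    _ ≤ Real.Gamma (y + (m+1:ℕ)) := lemB (m+1) y hy
    _ = Real.Gamma (x + ((m:ℝ)+3/2)) := by rw [hpt]

lemma endgame (d : ℕ) (hd : 2 ≤ d) (β₀ β k : ℝ) (hβ₀ : ((d:ℝ)+1)/2 < β₀) (hβ : β₀ ≤ β)
    (hk0 : 0 ≤ k) (hk2 : k ≤ ((d:ℝ)+1)/2)
    (hkey : ((β - k) ^ k * Real.Gamma (β - k) < Real.Gamma β) ∨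
      ((β - k) ^ k * Real.Gamma (β - k) ≤ Real.Gamma β ∧ k < ((d:ℝ)+1)/2)) :
    β ^ k * Real.Gamma (β - k) / Real.Gamma β
      < (1 - ((d:ℝ)+1)/(2*β₀)) ^ (-((d:ℝ)+1)/2) := by
  have hdr : (0:ℝ) < (d:ℝ)+1 := by positivity
  have hβ₀pos : 0 < β₀ := lt_trans (by positivity) hβ₀
  set c := 1 - ((d:ℝ)+1)/(2*β₀) with hc'
  have hfrac : ((d:ℝ)+1)/(2*β₀) < 1 := by
    rw [div_lt_one (by positivity)]; linarith
  have hc0 : 0 < c := by rw [hc']; linarith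
  have hc1 : c < 1 := by
    have : 0 < ((d:ℝ)+1)/(2*β₀) := by positivity
    rw [hc']; linarith
  have hβpos : 0 < β := by linarith
  have hx : 0 < β - k := by linarith
  have hΓx : 0 < Real.Gamma (β - k) := Real.Gamma_pos_of_pos hx
  have hΓβ : 0 < Real.Gamma β := Real.Gamma_pos_of_pos hβpos
  have hcb : c * β ≤ β - k := by
    have h1 : k ≤ ((d:ℝ)+1)/(2*β₀)*β := by
      rw [div_mul_eq_mul_div, le_div_iff₀ (by positivity)]
      nlinarith
    rw [hc']; nlinarith
  have hdiv : β / (β - k) ≤ 1/c := by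
    rw [div_le_div_iff₀ hx hc0]; nlinarith
  have hb1 : 1 < 1/c := by rw [lt_div_iff₀ hc0]; linarith
  have hratio : (β/(β-k)) ^ k ≤ (1/c) ^ k :=
    Real.rpow_le_rpow (by positivity) hdiv hk0
  have hfin : (1/c) ^ (((d:ℝ)+1)/2) = c ^ (-((d:ℝ)+1)/2) := by
    rw [one_div, Real.inv_rpow hc0.le, ← Real.rpow_neg hc0.le, neg_div]
  have hmid : β ^ k * Real.Gamma (β-k) / ((β-k) ^ k * Real.Gamma (β-k))
      = (β/(β-k)) ^ k := by
    rw [mul_div_mul_right _ _ (ne_of_gt hΓx), ← Real.div_rpow hβpos.le hx.le]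
  rcases hkey with hkey | ⟨hkey, hklt⟩
  · have step1 : β ^ k * Real.Gamma (β-k) / Real.Gamma β
        < β ^ k * Real.Gamma (β-k) / ((β-k) ^ k * Real.Gamma (β-k)) :=
      div_lt_div_of_pos_left (by positivity) (by positivity) hkey
    have step4 : (1/c) ^ k ≤ (1/c) ^ (((d:ℝ)+1)/2) :=
      (Real.rpow_le_rpow_left_iff hb1).mpr hk2
    calc β ^ k * Real.Gamma (β-k) / Real.Gamma β
        < β ^ k * Real.Gamma (β-k) / ((β-k) ^ k * Real.Gamma (β-k)) := step1
      _ = (β/(β-k)) ^ k := hmid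
      _ ≤ (1/c) ^ k := hratio
      _ ≤ (1/c) ^ (((d:ℝ)+1)/2) := step4
      _ = c ^ (-((d:ℝ)+1)/2) := hfin
  · have step1 : β ^ k * Real.Gamma (β-k) / Real.Gamma β
        ≤ β ^ k * Real.Gamma (β-k) / ((β-k) ^ k * Real.Gamma (β-k)) :=
      div_le_div_of_nonneg_left (by positivity) (by positivity) hkey
    have step4 : (1/c) ^ k < (1/c) ^ (((d:ℝ)+1)/2) :=
      (Real.rpow_lt_rpow_left_iff hb1).mpr hklt
    calc β ^ k * Real.Gamma (β-k) / Real.Gamma β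
        ≤ β ^ k * Real.Gamma (β-k) / ((β-k) ^ k * Real.Gamma (β-k)) := step1
      _ = (β/(β-k)) ^ k := hmid
      _ ≤ (1/c) ^ k := hratio
      _ < (1/c) ^ (((d:ℝ)+1)/2) := step4
      _ = c ^ (-((d:ℝ)+1)/2) := hfin


/-- For `d ≥ 2`, reals `β₀ > (d+1)/2`, `β ≥ β₀`, and integer
`0 ≤ i ≤ d-1`: `β^{i/2+1} Γ(β-1-i/2)/Γ(β) < (1-(d+1)/(2β₀))^{-(d+1)/2}`. -/
theorem stmt_11 (d : ℕ) (hd : 2 ≤ d) (β₀ β : ℝ)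
    (hβ₀ : ((d : ℝ) + 1) / 2 < β₀) (hβ : β₀ ≤ β) (i : ℕ) (hi : i ≤ d - 1) :
    β ^ ((i : ℝ) / 2 + 1) * Real.Gamma (β - 1 - (i : ℝ) / 2) / Real.Gamma β
      < (1 - ((d : ℝ) + 1) / (2 * β₀)) ^ (-((d : ℝ) + 1) / 2) := by
  have hid : (i:ℝ) + 1 ≤ (d:ℝ) := by
    have : i + 1 ≤ d := by omega
    exact_mod_cast this
  have hk2 : (i:ℝ)/2 + 1 ≤ ((d:ℝ)+1)/2 := by linarith
  have hk0 : (0:ℝ) ≤ (i:ℝ)/2 + 1 := by positivity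
  have hβpos : 0 < β := by
    have : (0:ℝ) < ((d:ℝ)+1)/2 := by positivity
    linarith
  have hx : 0 < β - ((i:ℝ)/2 + 1) := by linarith
  have hrw : β - 1 - (i:ℝ)/2 = β - ((i:ℝ)/2 + 1) := by ring
  rw [hrw]
  refine endgame d hd β₀ β ((i:ℝ)/2 + 1) hβ₀ hβ hk0 hk2 ?_
  rcases Nat.even_or_odd i with ⟨m, hm⟩ | ⟨m, hm⟩
  · -- i = m + m
    rcases Nat.eq_zero_or_pos m with hm0 | hm1
    · -- i = 0, k = 1
      right
      subst hm0
      have h0 : ((i:ℝ)/2 + 1) = 1 := by subst hm; norm_num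
      rw [h0]
      constructor
      · rw [Real.rpow_one, ← Real.Gamma_add_one (ne_of_gt (by rw [h0] at hx; linarith)),
          show β - 1 + 1 = β by ring]
      · have hd2 : (2:ℝ) ≤ (d:ℝ) := by exact_mod_cast hd
        linarith
    · left
      have hke : (i:ℝ)/2 + 1 = (m:ℝ) + 1 := by
        subst hm; push_cast; ring
      rw [hke]
      have := key_even m hm1 (β - ((m:ℝ)+1)) (by rw [← hke]; exact hx)
      rwa [show β - ((m:ℝ)+1) + ((m:ℝ)+1) = β by ring] at this
  · -- i = 2m + 1
    left
    have hke : (i:ℝ)/2 + 1 = (m:ℝ) + 3/2 := by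
      subst hm; push_cast; ring
    rw [hke]
    have := key_odd m (β - ((m:ℝ)+3/2)) (by rw [← hke]; exact hx)
    rwa [show β - ((m:ℝ)+3/2) + ((m:ℝ)+3/2) = β by ring] at this
end
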